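/- arXiv:0812.1978 — 6 statements merged into one kernel-verified Lean document; each statement's English description precedes it below -/
import Mathlib

section
/- Let h : ℝ → ℝ be Lipschitz continuous and t > 0. If x₁ < x₂, y₁ is a minimizer of y ↦ (x₁−y)²/(2t) + h(y), and y₂ is a minimizer of y ↦ (x₂−y)²/(2t) + h(y), then y₁ ≤ y₂. In particular the minimizing map x ↦ y(x,t) is nondecreasing in x. -/
/-- For a Lipschitz function `h : ℝ → ℝ`, `t > 0` and `x₁ < x₂`, if `y₁` minimizes
`y ↦ (x₁ - y)^2/(2t) + h y` and `y₂` minimizes `y ↦ (x₂ - y)^2/(2t) + h y`,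
then `y₁ ≤ y₂`: the Hopf–Lax minimizing map `x ↦ y(x,t)` is nondecreasing in `x`. -/
theorem hopfLax_minimizer_nondecreasing (h : ℝ → ℝ) (K : NNReal) (hLip : LipschitzWith K h)
    (t : ℝ) (ht : 0 < t) (x₁ x₂ y₁ y₂ : ℝ) (hx : x₁ < x₂)
    (h₁ : ∀ z : ℝ, (x₁ - y₁) ^ 2 / (2 * t) + h y₁ ≤ (x₁ - z) ^ 2 / (2 * t) + h z)
    (h₂ : ∀ z : ℝ, (x₂ - y₂) ^ 2 / (2 * t) + h y₂ ≤ (x₂ - z) ^ 2 / (2 * t) + h z) :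
    y₁ ≤ y₂ := by
  by_contra hc
  push_neg at hc
  have A := h₁ y₂
  have B := h₂ y₁
  have hsum : (x₁ - y₁) ^ 2 / (2 * t) + (x₂ - y₂) ^ 2 / (2 * t) ≤
      (x₁ - y₂) ^ 2 / (2 * t) + (x₂ - y₁) ^ 2 / (2 * t) := by linarith
  have h2t : 0 < 2 * t := by linarith
  rw [← add_div, ← add_div, div_le_div_iff₀ h2t h2t] at hsum
  nlinarith [mul_pos (sub_pos.2 hx) (sub_pos.2 hc)]
end

section
/- Let h : ℝ → ℝ be Lipschitz with constant L, and define φ(x,t) = inf_{y ∈ ℝ} [ (x−y)²/(2t) + h(y) ] for t > 0. Then x ↦ φ(x,t) is Lipschitz with constant L for each fixed t > 0, and at every point (x₀,t₀) with t₀ > 0 at which φ is (totally) differentiable, the Hamilton–Jacobi equation ∂_t φ(x₀,t₀) + (1/2)(∂_x φ(x₀,t₀))² = 0 holds. -/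
open Filter Topology

-- lower bound of the integrand
lemma hl_lb (h : ℝ → ℝ) (L : NNReal) (hLip : LipschitzWith L h) (x t : ℝ) (ht : 0 < t)
    (y : ℝ) : h x - (L:ℝ)^2 * t / 2 ≤ (x - y)^2/(2*t) + h y := by
  have hd := hLip.dist_le_mul x y
  rw [Real.dist_eq, Real.dist_eq] at hd
  have h1 : h x - h y ≤ (L:ℝ) * |x - y| := (abs_le.1 hd).2
  have h2 : |x - y| ^ 2 = (x - y)^2 := sq_abs _
  have key : (L:ℝ) * |x - y| - (L:ℝ)^2 * t / 2 ≤ (x - y)^2/(2*t) := by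
    rw [le_div_iff₀ (by linarith)]
    nlinarith [sq_nonneg (|x - y| - (L:ℝ) * t)]
  linarith

lemma hl_bdd (h : ℝ → ℝ) (L : NNReal) (hLip : LipschitzWith L h) (x t : ℝ) (ht : 0 < t) :
    BddBelow (Set.range fun y : ℝ => (x - y)^2/(2*t) + h y) :=
  ⟨h x - (L:ℝ)^2 * t / 2, Set.forall_mem_range.2 fun y => hl_lb h L hLip x t ht y⟩

-- attainment of the infimum
lemma hl_min (h : ℝ → ℝ) (L : NNReal) (hLip : LipschitzWith L h) (x t : ℝ) (ht : 0 < t) :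
    ∃ z : ℝ, ∀ y : ℝ, (x - z)^2/(2*t) + h z ≤ (x - y)^2/(2*t) + h y := by
  set R : ℝ := 2*(L:ℝ)*t + t with hR
  have hL0 : (0:ℝ) ≤ L := L.coe_nonneg
  have hR0 : 0 < R := by positivity
  have hcont : Continuous fun y : ℝ => (x - y)^2/(2*t) + h y := by
    have : Continuous fun y : ℝ => (x - y)^2/(2*t) := by fun_prop
    exact this.add hLip.continuous
  obtain ⟨z, hzmem, hz⟩ := isCompact_Icc.exists_isMinOn
    (Set.nonempty_Icc.2 (by linarith : x - R ≤ x + R)) hcont.continuousOn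
  refine ⟨z, fun y => ?_⟩
  by_cases hy : y ∈ Set.Icc (x - R) (x + R)
  · exact hz hy
  · have hzx : (x - z)^2/(2*t) + h z ≤ (x - x)^2/(2*t) + h x :=
      hz (Set.mem_Icc.2 ⟨by linarith, by linarith⟩)
    have hyR : R < |x - y| := by
      rw [Set.mem_Icc, not_and_or] at hy
      rcases hy with hy | hy
      · push_neg at hy; rw [abs_of_pos (by linarith)]; linarith
      · push_neg at hy; rw [abs_of_neg (by linarith)]; linarith
    have hd := hLip.dist_le_mul x y
    rw [Real.dist_eq, Real.dist_eq] at hd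
    have h1 : h x - h y ≤ (L:ℝ) * |x - y| := (abs_le.1 hd).2
    have h2 : |x - y| ^ 2 = (x - y)^2 := sq_abs _
    have hLt : (L:ℝ) * |x - y| ≤ (x - y)^2/(2*t) := by
      rw [le_div_iff₀ (by linarith)]
      nlinarith [abs_nonneg (x - y)]
    have hxx : (x - x)^2/(2*t) = 0 := by norm_num
    linarith

-- derivative comparison lemma
lemma deriv_le_of_slope (g : ℝ → ℝ) (d c : ℝ) (hg : HasDerivAt g d 0)
    (hc : ∀ᶠ τ in 𝓝[>] (0:ℝ), g τ ≤ g 0 + c * τ) : d ≤ c := by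
  have h1 : Tendsto (slope g 0) (𝓝[>] (0:ℝ)) (𝓝 d) :=
    (hasDerivAt_iff_tendsto_slope.1 hg).mono_left
      (nhdsWithin_mono _ (fun x hx => ne_of_gt hx))
  refine le_of_tendsto h1 ?_
  filter_upwards [hc, self_mem_nhdsWithin] with τ hτ hτ0
  have hτ0' : (0:ℝ) < τ := hτ0
  rw [slope_def_field]
  rw [div_le_iff₀ (by simpa using hτ0')]
  simp only [sub_zero]
  linarith


/-- For `h : ℝ → ℝ` Lipschitz with constant `L`, the Hopf–Lax function
`φ(x,t) = ⨅ y, (x - y)^2/(2t) + h y`, viewed as `Φ : ℝ × ℝ → ℝ`, is Lipschitz with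
constant `L` in `x` for every fixed `t > 0`, and at every point `(x₀, t₀)` with
`t₀ > 0` where `Φ` is (totally) differentiable, the Hamilton–Jacobi equation
`∂ₜφ + (1/2)(∂ₓφ)² = 0` holds (here `∂ₜφ = D (0,1)` and `∂ₓφ = D (1,0)` for the
total derivative `D`). -/
theorem hopfLax_lipschitz_and_solves_HJ (h : ℝ → ℝ) (L : NNReal) (hLip : LipschitzWith L h) :
    (∀ t : ℝ, 0 < t →
      LipschitzWith L (fun x : ℝ => ⨅ y : ℝ, ((x - y) ^ 2 / (2 * t) + h y))) ∧
    (∀ (x₀ t₀ : ℝ) (D : ℝ × ℝ →L[ℝ] ℝ), 0 < t₀ →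
      HasFDerivAt (fun p : ℝ × ℝ => ⨅ y : ℝ, ((p.1 - y) ^ 2 / (2 * p.2) + h y)) D (x₀, t₀) →
      D (0, 1) + (1 / 2) * (D (1, 0)) ^ 2 = 0) := by
  constructor
  · -- Lipschitz in x
    intro t ht
    have key : ∀ x₁ x₂ : ℝ, (⨅ y : ℝ, ((x₁ - y) ^ 2 / (2 * t) + h y)) ≤
        (⨅ y : ℝ, ((x₂ - y) ^ 2 / (2 * t) + h y)) + L * |x₁ - x₂| := by
      intro x₁ x₂
      rw [← sub_le_iff_le_add]
      refine le_ciInf fun y => ?_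
      rw [sub_le_iff_le_add]
      have step : (x₁ - (y + (x₁ - x₂))) ^ 2 / (2 * t) + h (y + (x₁ - x₂)) ≤
          (x₂ - y) ^ 2 / (2 * t) + h y + L * |x₁ - x₂| := by
        have hd := hLip.dist_le_mul (y + (x₁ - x₂)) y
        rw [Real.dist_eq, Real.dist_eq] at hd
        have h1 : h (y + (x₁ - x₂)) - h y ≤ (L:ℝ) * |x₁ - x₂| := by
          have := (abs_le.1 hd).2
          simpa using this
        have heq : (x₁ - (y + (x₁ - x₂))) ^ 2 = (x₂ - y) ^ 2 := by ring
        rw [heq]; linarith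
      exact le_trans (ciInf_le (hl_bdd h L hLip x₁ t ht) (y + (x₁ - x₂))) step
    apply LipschitzWith.of_dist_le_mul
    intro x₁ x₂
    rw [Real.dist_eq, Real.dist_eq, abs_sub_le_iff]
    constructor
    · linarith [key x₁ x₂]
    · have := key x₂ x₁
      rw [abs_sub_comm] at this
      linarith
  · -- Hamilton–Jacobi equation
    intro x₀ t₀ D ht₀ hD
    set Φ : ℝ × ℝ → ℝ := fun p : ℝ × ℝ => ⨅ y : ℝ, ((p.1 - y) ^ 2 / (2 * p.2) + h y) with hΦ
    set p : ℝ := D (1, 0) with hp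
    set b : ℝ := D (0, 1) with hb
    -- derivative along lines
    have curve : ∀ a c : ℝ, HasDerivAt (fun τ : ℝ => Φ (x₀ + τ * a, t₀ + τ * c)) (D (a, c)) 0 := by
      intro a c
      have h1 : HasDerivAt (fun τ : ℝ => x₀ + τ * a) a 0 := by
        simpa using ((hasDerivAt_id (0:ℝ)).mul_const a).const_add x₀
      have h2 : HasDerivAt (fun τ : ℝ => t₀ + τ * c) c 0 := by
        simpa using ((hasDerivAt_id (0:ℝ)).mul_const c).const_add t₀
      have hline : HasDerivAt (fun τ : ℝ => ((x₀ + τ * a, t₀ + τ * c) : ℝ × ℝ)) ((a, c)) 0 :=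
        h1.prodMk h2
      have hD' : HasFDerivAt Φ D ((fun τ : ℝ => ((x₀ + τ * a, t₀ + τ * c) : ℝ × ℝ)) 0) := by
        norm_num
        exact hD
      exact hD'.comp_hasDerivAt 0 hline
    have hDlin : ∀ a c : ℝ, D (a, c) = a * p + c * b := by
      intro a c
      have : ((a, c) : ℝ × ℝ) = a • ((1:ℝ), (0:ℝ)) + c • ((0:ℝ), (1:ℝ)) := by
        simp [Prod.ext_iff]
      rw [this, map_add, map_smul, map_smul, smul_eq_mul, smul_eq_mul, hp, hb]
    -- Step A : ∀ q, q*p + b ≤ q^2/2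
    have stepA : ∀ q : ℝ, q * p + b ≤ q ^ 2 / 2 := by
      intro q
      have hder := curve q 1
      have hup : ∀ᶠ τ in 𝓝[>] (0:ℝ),
          (fun τ : ℝ => Φ (x₀ + τ * q, t₀ + τ * 1)) τ ≤
          (fun τ : ℝ => Φ (x₀ + τ * q, t₀ + τ * 1)) 0 + (q ^ 2 / 2) * τ := by
        filter_upwards [self_mem_nhdsWithin] with τ hτ
        have hτ0 : (0:ℝ) < τ := hτ
        have hg0 : ((x₀ + 0 * q, t₀ + 0 * 1) : ℝ × ℝ) = (x₀, t₀) := by norm_num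
        rw [hg0]
        simp only [mul_one, hΦ]
        rw [← sub_le_iff_le_add]
        refine le_ciInf fun y => ?_
        rw [sub_le_iff_le_add]
        have pt : (x₀ + τ * q - y) ^ 2 / (2 * (t₀ + τ)) ≤
            (x₀ - y) ^ 2 / (2 * t₀) + q ^ 2 / 2 * τ := by
          have e : (x₀ - y) ^ 2 / (2 * t₀) + q ^ 2 / 2 * τ -
              (x₀ + τ * q - y) ^ 2 / (2 * (t₀ + τ)) =
              (τ * ((x₀ - y) - t₀ * q) ^ 2) / (2 * t₀ * (t₀ + τ)) := by
            field_simp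
            ring
          nlinarith [div_nonneg (mul_nonneg hτ0.le (sq_nonneg ((x₀ - y) - t₀ * q)))
            (by positivity : (0:ℝ) ≤ 2 * t₀ * (t₀ + τ))]
        calc (⨅ y' : ℝ, ((x₀ + τ * q - y') ^ 2 / (2 * (t₀ + τ)) + h y'))
            ≤ (x₀ + τ * q - y) ^ 2 / (2 * (t₀ + τ)) + h y :=
              ciInf_le (hl_bdd h L hLip (x₀ + τ * q) (t₀ + τ) (by linarith)) y
          _ ≤ (x₀ - y) ^ 2 / (2 * t₀) + h y + q ^ 2 / 2 * τ := by linarith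
      have := deriv_le_of_slope _ _ _ hder hup
      rw [hDlin q 1] at this
      linarith
    -- Step B : lower bound using a minimizer
    obtain ⟨z, hz⟩ := hl_min h L hLip x₀ t₀ ht₀
    set q : ℝ := (x₀ - z) / t₀ with hq
    have hxz : x₀ - z = t₀ * q := by
      rw [hq]; field_simp
    have hval : Φ (x₀, t₀) = (x₀ - z) ^ 2 / (2 * t₀) + h z :=
      le_antisymm (ciInf_le (hl_bdd h L hLip x₀ t₀ ht₀) z) (le_ciInf hz)
    have stepB : q * p + b ≥ q ^ 2 / 2 := by
      have hder := curve (-q) (-1)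
      have hup : ∀ᶠ τ in 𝓝[>] (0:ℝ),
          (fun τ : ℝ => Φ (x₀ + τ * (-q), t₀ + τ * (-1))) τ ≤
          (fun τ : ℝ => Φ (x₀ + τ * (-q), t₀ + τ * (-1))) 0 + (-(q ^ 2) / 2) * τ := by
        filter_upwards [Ioo_mem_nhdsGT_of_mem (Set.mem_Ico.2 ⟨le_refl 0, ht₀⟩)] with τ hτ
        obtain ⟨hτ0, hτt⟩ := hτ
        have hg0 : ((x₀ + 0 * (-q), t₀ + 0 * (-1)) : ℝ × ℝ) = (x₀, t₀) := by norm_num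
        rw [hg0, hval]
        simp only [hΦ]
        have hbd : Φ (x₀ + τ * (-q), t₀ + τ * (-1)) ≤
            (x₀ + τ * (-q) - z) ^ 2 / (2 * (t₀ + τ * (-1))) + h z :=
          ciInf_le (hl_bdd h L hLip (x₀ + τ * (-q)) (t₀ + τ * (-1)) (by simp; linarith)) z
        have hnum : x₀ + τ * (-q) - z = (t₀ - τ) * q := by
          have : x₀ - z = t₀ * q := hxz
          linarith [this]  -- τ*(-q) = -τ q ; rearr
        have hden : t₀ + τ * (-1) = t₀ - τ := by ring
        have hcalc : (x₀ + τ * (-q) - z) ^ 2 / (2 * (t₀ + τ * (-1))) + h z =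
            (t₀ - τ) * q ^ 2 / 2 + h z := by
          rw [hnum, hden]
          have hfrac : ((t₀ - τ) * q) ^ 2 / (2 * (t₀ - τ)) = (t₀ - τ) * q ^ 2 / 2 := by
            rw [div_eq_div_iff (by linarith) (by norm_num)]; ring
          rw [hfrac]
        have hval2 : (x₀ - z) ^ 2 / (2 * t₀) = t₀ * q ^ 2 / 2 := by
          rw [hxz]
          rw [div_eq_div_iff (by linarith) (by norm_num)]
          ring
        rw [hval2]
        calc Φ (x₀ + τ * (-q), t₀ + τ * (-1)) ≤ (t₀ - τ) * q ^ 2 / 2 + h z := by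
              rw [← hcalc]; exact hbd
          _ ≤ t₀ * q ^ 2 / 2 + h z + (-(q ^ 2) / 2) * τ := by nlinarith [sq_nonneg q]
      have := deriv_le_of_slope _ _ _ hder hup
      rw [hDlin (-q) (-1)] at this
      linarith
    have hA := stepA p
    nlinarith [sq_nonneg (p - q)]
end

section
/- Fix x ∈ ℝ and t > 0 such that the minimizer y(x,t) of y ↦ (x−y)²/(2t) − log 2 − log cosh y is unique. Define u_N(x,t) = [ ∫_ℝ ((x−y)/t) · exp( −N( (x−y)²/(2t) − log 2 − log cosh y ) ) dy ] / [ ∫_ℝ exp( −N( (x−y)²/(2t) − log 2 − log cosh y ) ) dy ] and u(x,t) = (x − y(x,t))/t. Then there exists a constant C = C(x,t) > 0 such that |u_N(x,t) − u(x,t)| ≤ C/√N for all integers N ≥ 1. -/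
open Real MeasureTheory


lemma cw_hd_logcosh (y : ℝ) : HasDerivAt (fun z => Real.log (Real.cosh z)) (Real.tanh y) y := by
  have h := (Real.hasDerivAt_log (Real.cosh_pos y).ne').comp y (Real.hasDerivAt_cosh y)
  exact h.congr_deriv (by rw [Real.tanh_eq_sinh_div_cosh]; ring)

lemma cw_hd_tanh (y : ℝ) : HasDerivAt Real.tanh (1 / Real.cosh y ^ 2) y := by
  have h := (Real.hasDerivAt_sinh y).div (Real.hasDerivAt_cosh y) (Real.cosh_pos y).ne'
  have e : Real.tanh = fun z => Real.sinh z / Real.cosh z := by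
    funext z; exact Real.tanh_eq_sinh_div_cosh z
  rw [e]
  refine h.congr_deriv ?_
  have := Real.cosh_sq_sub_sinh_sq y
  have h2 : Real.cosh y ≠ 0 := (Real.cosh_pos y).ne'
  field_simp
  nlinarith [this]


lemma cw_abs_sinh_le_cosh (y : ℝ) : |Real.sinh y| ≤ Real.cosh y := by
  rw [abs_le]
  constructor
  · nlinarith [Real.cosh_add_sinh y, Real.exp_pos y]
  · nlinarith [Real.cosh_sub_sinh y, Real.exp_pos (-y)]

lemma cw_hd_sech (y : ℝ) :
    HasDerivAt (fun z => 1 / Real.cosh z ^ 2) (-(2 * Real.sinh y / Real.cosh y ^ 3)) y := by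
  have h := ((Real.hasDerivAt_cosh y).pow 2).inv (pow_pos (Real.cosh_pos y) 2).ne'
  have e : (fun z => 1 / Real.cosh z ^ 2) = fun z => (Real.cosh z ^ 2)⁻¹ := by
    funext z; rw [one_div]
  rw [e]
  refine h.congr_deriv ?_
  have h2 : Real.cosh y ≠ 0 := (Real.cosh_pos y).ne'
  simp only [Pi.pow_apply]
  field_simp
  ring

lemma cw_abs_sech_deriv_le (y : ℝ) : |(-(2 * Real.sinh y / Real.cosh y ^ 3))| ≤ 2 := by
  rw [abs_neg, abs_div, div_le_iff₀ (by positivity)]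
  have h1 := cw_abs_sinh_le_cosh y
  have h2 := Real.one_le_cosh y
  have h4 : 0 ≤ |Real.sinh y| := abs_nonneg _
  have : |2 * Real.sinh y| = 2 * |Real.sinh y| := by rw [abs_mul]; norm_num
  rw [this, abs_of_pos (show (0:ℝ) < Real.cosh y ^ 3 by positivity)]
  nlinarith [sq_nonneg (Real.cosh y), sq_nonneg (Real.cosh y - 1)]


lemma cw_abs_tanh_le (y : ℝ) : |Real.tanh y| ≤ 1 := by
  rw [Real.tanh_eq_sinh_div_cosh, abs_div, abs_of_pos (Real.cosh_pos y),
    div_le_one (Real.cosh_pos y)]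
  exact cw_abs_sinh_le_cosh y

lemma cw_sech_le_one (y : ℝ) : 1 / Real.cosh y ^ 2 ≤ 1 := by
  rw [div_le_one (by positivity)]
  nlinarith [Real.one_le_cosh y]


lemma cw_nonneg_Ici {f f' : ℝ → ℝ} (hf : ∀ y, HasDerivAt f (f' y) y) (s : ℝ)
    (hfs : f s = 0) (hr : ∀ y, s ≤ y → 0 ≤ f' y) : ∀ y, s ≤ y → 0 ≤ f y := by
  have hd : Differentiable ℝ f := fun y => (hf y).differentiableAt
  have hmono : MonotoneOn f (Set.Ici s) := by
    refine monotoneOn_of_deriv_nonneg (convex_Ici s) hd.continuous.continuousOn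
      (hd.differentiableOn) ?_
    intro y hy
    rw [(hf y).deriv]
    exact hr y (le_of_lt (by simpa using hy))
  intro y hy
  have := hmono (Set.self_mem_Ici) (Set.mem_Ici.mpr hy) hy
  simpa [hfs] using this

lemma cw_nonneg_Iic {f f' : ℝ → ℝ} (hf : ∀ y, HasDerivAt f (f' y) y) (s : ℝ)
    (hfs : f s = 0) (hl : ∀ y, y ≤ s → f' y ≤ 0) : ∀ y, y ≤ s → 0 ≤ f y := by
  have hd : Differentiable ℝ f := fun y => (hf y).differentiableAt
  have hanti : AntitoneOn f (Set.Iic s) := by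
    refine antitoneOn_of_deriv_nonpos (convex_Iic s) hd.continuous.continuousOn
      (hd.differentiableOn) ?_
    intro y hy
    rw [(hf y).deriv]
    exact hl y (le_of_lt (by simpa using hy))
  intro y hy
  have := hanti (Set.mem_Iic.mpr hy) (Set.self_mem_Iic) hy
  simpa [hfs] using this

lemma cw_monotone {f f' : ℝ → ℝ} (hf : ∀ y, HasDerivAt f (f' y) y)
    (h0 : ∀ y, 0 ≤ f' y) : Monotone f := by
  have hd : Differentiable ℝ f := fun y => (hf y).differentiableAt
  refine monotone_of_deriv_nonneg hd ?_
  intro y; rw [(hf y).deriv]; exact h0 y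


lemma cw_tanh_mono : Monotone Real.tanh :=
  cw_monotone cw_hd_tanh (fun y => by positivity)

lemma cw_id_sub_tanh_mono : Monotone (fun y => y - Real.tanh y) := by
  refine cw_monotone (f' := fun y => 1 - 1 / Real.cosh y ^ 2) (fun y => ?_) (fun y => ?_)
  · exact (hasDerivAt_id y).sub (cw_hd_tanh y)
  · have := cw_sech_le_one y; linarith

lemma cw_id_sub_logcosh_mono : Monotone (fun y => y - Real.log (Real.cosh y)) := by
  refine cw_monotone (f' := fun y => 1 - Real.tanh y) (fun y => ?_) (fun y => ?_)
  · exact (hasDerivAt_id y).sub (cw_hd_logcosh y)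
  · show (0:ℝ) ≤ 1 - Real.tanh y
    have := cw_abs_tanh_le y; rw [abs_le] at this; linarith [this.2]

lemma cw_id_add_logcosh_mono : Monotone (fun y => y + Real.log (Real.cosh y)) := by
  refine cw_monotone (f' := fun y => 1 + Real.tanh y) (fun y => ?_) (fun y => ?_)
  · exact (hasDerivAt_id y).add (cw_hd_logcosh y)
  · show (0:ℝ) ≤ 1 + Real.tanh y
    have := cw_abs_tanh_le y; rw [abs_le] at this; linarith [this.1]

lemma cw_sech_lip_a : Monotone (fun y => 2 * y + 1 / Real.cosh y ^ 2) := by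
  refine cw_monotone (f' := fun y => 2 + (-(2 * Real.sinh y / Real.cosh y ^ 3)))
    (fun y => ?_) (fun y => ?_)
  · exact (((hasDerivAt_id y).const_mul 2).add (cw_hd_sech y)).congr_deriv (by simp)
  · show (0:ℝ) ≤ 2 + -(2 * Real.sinh y / Real.cosh y ^ 3)
    have := cw_abs_sech_deriv_le y; rw [abs_le] at this; linarith [this.1]

lemma cw_sech_lip_b : Monotone (fun y => 2 * y - 1 / Real.cosh y ^ 2) := by
  refine cw_monotone (f' := fun y => 2 - (-(2 * Real.sinh y / Real.cosh y ^ 3)))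
    (fun y => ?_) (fun y => ?_)
  · exact (((hasDerivAt_id y).const_mul 2).sub (cw_hd_sech y)).congr_deriv (by simp)
  · show (0:ℝ) ≤ 2 - -(2 * Real.sinh y / Real.cosh y ^ 3)
    have := cw_abs_sech_deriv_le y; rw [abs_le] at this; linarith [this.2]

-- tanh expansion bounds around s
lemma cw_T1r (s : ℝ) : ∀ y, s ≤ y →
    1 / Real.cosh s ^ 2 * (y - s) - (y - s) ^ 2 ≤ Real.tanh y - Real.tanh s := by
  have h := cw_nonneg_Ici
    (f := fun z => Real.tanh z - Real.tanh s - 1 / Real.cosh s ^ 2 * (z - s) + (z - s) ^ 2)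
    (f' := fun z => 1 / Real.cosh z ^ 2 - 1 / Real.cosh s ^ 2 + 2 * (z - s)) ?_ s (by ring) ?_
  · intro y hy; have := h y hy; linarith
  · intro z
    have h1 := (cw_hd_sech z).sub_const (Real.tanh s)  -- dummy
    have h2 := ((cw_hd_tanh z).sub_const (Real.tanh s)).sub
      (((hasDerivAt_id z).sub_const s).const_mul (1 / Real.cosh s ^ 2))
    have h3 := h2.add (((hasDerivAt_id z).sub_const s).pow 2)
    refine h3.congr_deriv ?_
    (try simp) <;> (try ring)
  · intro z hz
    have := cw_sech_lip_a hz
    simp only at this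
    show (0:ℝ) ≤ 1 / Real.cosh z ^ 2 - 1 / Real.cosh s ^ 2 + 2 * (z - s)
    linarith

lemma cw_T2r (s : ℝ) : ∀ y, s ≤ y →
    Real.tanh y - Real.tanh s ≤ 1 / Real.cosh s ^ 2 * (y - s) + (y - s) ^ 2 := by
  have h := cw_nonneg_Ici
    (f := fun z => 1 / Real.cosh s ^ 2 * (z - s) + (z - s) ^ 2 - (Real.tanh z - Real.tanh s))
    (f' := fun z => 1 / Real.cosh s ^ 2 + 2 * (z - s) - 1 / Real.cosh z ^ 2) ?_ s (by ring) ?_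
  · intro y hy; have := h y hy; linarith
  · intro z
    have h2 := (((hasDerivAt_id z).sub_const s).const_mul (1 / Real.cosh s ^ 2)).add
      (((hasDerivAt_id z).sub_const s).pow 2)
    have h3 := h2.sub ((cw_hd_tanh z).sub_const (Real.tanh s))
    refine h3.congr_deriv ?_
    (try simp) <;> (try ring)
  · intro z hz
    have := cw_sech_lip_b hz
    simp only at this
    show (0:ℝ) ≤ 1 / Real.cosh s ^ 2 + 2 * (z - s) - 1 / Real.cosh z ^ 2
    linarith

lemma cw_T1l (s : ℝ) : ∀ y, y ≤ s →
    1 / Real.cosh s ^ 2 * (s - y) - (s - y) ^ 2 ≤ Real.tanh s - Real.tanh y := by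
  have h := cw_nonneg_Iic
    (f := fun z => Real.tanh s - Real.tanh z - 1 / Real.cosh s ^ 2 * (s - z) + (s - z) ^ 2)
    (f' := fun z => -(1 / Real.cosh z ^ 2) + 1 / Real.cosh s ^ 2 - 2 * (s - z)) ?_ s (by ring) ?_
  · intro y hy; have := h y hy; linarith
  · intro z
    have h2 := ((hasDerivAt_const z (Real.tanh s)).sub (cw_hd_tanh z)).sub
      (((hasDerivAt_const z s).sub (hasDerivAt_id z)).const_mul (1 / Real.cosh s ^ 2))
    have h3 := h2.add (((hasDerivAt_const z s).sub (hasDerivAt_id z)).pow 2)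
    refine h3.congr_deriv ?_
    (try simp) <;> (try ring)
  · intro z hz
    have := cw_sech_lip_b hz
    simp only at this
    show -(1 / Real.cosh z ^ 2) + 1 / Real.cosh s ^ 2 - 2 * (s - z) ≤ 0
    linarith

lemma cw_T2l (s : ℝ) : ∀ y, y ≤ s →
    Real.tanh s - Real.tanh y ≤ 1 / Real.cosh s ^ 2 * (s - y) + (s - y) ^ 2 := by
  have h := cw_nonneg_Iic
    (f := fun z => 1 / Real.cosh s ^ 2 * (s - z) + (s - z) ^ 2 - (Real.tanh s - Real.tanh z))
    (f' := fun z => -(1 / Real.cosh s ^ 2) - 2 * (s - z) + 1 / Real.cosh z ^ 2) ?_ s (by ring) ?_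
  · intro y hy; have := h y hy; linarith
  · intro z
    have h2 := (((hasDerivAt_const z s).sub (hasDerivAt_id z)).const_mul
      (1 / Real.cosh s ^ 2)).add (((hasDerivAt_const z s).sub (hasDerivAt_id z)).pow 2)
    have h3 := h2.sub ((hasDerivAt_const z (Real.tanh s)).sub (cw_hd_tanh z))
    refine h3.congr_deriv ?_
    (try simp) <;> (try ring)
  · intro z hz
    have := cw_sech_lip_a hz
    simp only at this
    show -(1 / Real.cosh s ^ 2) - 2 * (s - z) + 1 / Real.cosh z ^ 2 ≤ 0
    linarith

lemma cw_hd_D (s z : ℝ) :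
    HasDerivAt (fun z => Real.log (Real.cosh z) - Real.log (Real.cosh s)
      - Real.tanh s * (z - s)) (Real.tanh z - Real.tanh s) z := by
  have h := ((cw_hd_logcosh z).sub_const (Real.log (Real.cosh s))).sub
    (((hasDerivAt_id z).sub_const s).const_mul (Real.tanh s))
  refine h.congr_deriv ?_
  (try simp) <;> (try ring)

lemma cw_D_nonneg (s y : ℝ) :
    0 ≤ Real.log (Real.cosh y) - Real.log (Real.cosh s) - Real.tanh s * (y - s) := by
  rcases le_total s y with h | h
  · exact cw_nonneg_Ici (cw_hd_D s) s (by ring) (fun z hz => by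
      have := cw_tanh_mono hz; show (0:ℝ) ≤ Real.tanh z - Real.tanh s; linarith) y h
  · exact cw_nonneg_Iic (cw_hd_D s) s (by ring) (fun z hz => by
      have := cw_tanh_mono hz; show Real.tanh z - Real.tanh s ≤ 0; linarith) y h

lemma cw_D_le_sq (s y : ℝ) :
    Real.log (Real.cosh y) - Real.log (Real.cosh s) - Real.tanh s * (y - s)
      ≤ (y - s) ^ 2 / 2 := by
  have key : ∀ z, HasDerivAt (fun z => (z - s) ^ 2 / 2 - (Real.log (Real.cosh z)
      - Real.log (Real.cosh s) - Real.tanh s * (z - s)))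
      ((z - s) - (Real.tanh z - Real.tanh s)) z := by
    intro z
    have h := ((((hasDerivAt_id z).sub_const s).pow 2).div_const 2).sub (cw_hd_D s z)
    refine h.congr_deriv ?_
    (try simp) <;> (try ring)
  rcases le_total s y with h | h
  · have := cw_nonneg_Ici key s (by ring) (fun z hz => by
      have h2 := cw_id_sub_tanh_mono hz
      simp only at h2
      show (0:ℝ) ≤ (z - s) - (Real.tanh z - Real.tanh s); linarith) y h
    linarith
  · have := cw_nonneg_Iic key s (by ring) (fun z hz => by
      have h2 := cw_id_sub_tanh_mono hz
      simp only at h2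
      show (z - s) - (Real.tanh z - Real.tanh s) ≤ 0; linarith) y h
    linarith

lemma cw_logcosh_lip (s y : ℝ) : |Real.log (Real.cosh y) - Real.log (Real.cosh s)| ≤ |y - s| := by
  rcases le_total s y with h | h
  · have h1 := cw_id_sub_logcosh_mono h
    have h2 := cw_id_add_logcosh_mono h
    simp only at h1 h2
    rw [abs_le, abs_of_nonneg (by linarith : (0:ℝ) ≤ y - s)]
    constructor <;> linarith
  · have h1 := cw_id_sub_logcosh_mono h
    have h2 := cw_id_add_logcosh_mono h
    simp only at h1 h2
    rw [abs_le, abs_of_nonpos (by linarith : y - s ≤ (0:ℝ))]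
    constructor <;> linarith

lemma cw_D_le_lin (s y : ℝ) :
    Real.log (Real.cosh y) - Real.log (Real.cosh s) - Real.tanh s * (y - s)
      ≤ 2 * |y - s| := by
  have h1 := cw_logcosh_lip s y
  have h2 : |Real.tanh s * (y - s)| ≤ |y - s| := by
    rw [abs_mul]
    have := cw_abs_tanh_le s
    nlinarith [abs_nonneg (y - s)]
  rw [abs_le] at h1 h2
  linarith [h1.2, h2.1]

lemma cw_D_lower (s y : ℝ) :
    1 / Real.cosh s ^ 2 * (y - s) ^ 2 / 2 - |y - s| ^ 3 / 3
      ≤ Real.log (Real.cosh y) - Real.log (Real.cosh s) - Real.tanh s * (y - s) := by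
  rcases le_total s y with h | h
  · rw [abs_of_nonneg (by linarith : (0:ℝ) ≤ y - s)]
    have key : ∀ z, HasDerivAt (fun z => (Real.log (Real.cosh z) - Real.log (Real.cosh s)
        - Real.tanh s * (z - s)) - 1 / Real.cosh s ^ 2 * (z - s) ^ 2 / 2 + (z - s) ^ 3 / 3)
        ((Real.tanh z - Real.tanh s) - 1 / Real.cosh s ^ 2 * (z - s) + (z - s) ^ 2) z := by
      intro z
      have h := ((cw_hd_D s z).sub
        (((((hasDerivAt_id z).sub_const s).pow 2).const_mul (1 / Real.cosh s ^ 2)).div_const 2)).add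
        ((((hasDerivAt_id z).sub_const s).pow 3).div_const 3)
      refine h.congr_deriv ?_
      (try simp) <;> (try ring)
    have := cw_nonneg_Ici key s (by ring) (fun z hz => by
      have := cw_T1r s z hz
      show (0:ℝ) ≤ (Real.tanh z - Real.tanh s) - 1 / Real.cosh s ^ 2 * (z - s) + (z - s) ^ 2
      linarith) y h
    linarith
  · rw [abs_of_nonpos (by linarith : y - s ≤ (0:ℝ))]
    have key : ∀ z, HasDerivAt (fun z => (Real.log (Real.cosh z) - Real.log (Real.cosh s)
        - Real.tanh s * (z - s)) - 1 / Real.cosh s ^ 2 * (z - s) ^ 2 / 2 + (s - z) ^ 3 / 3)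
        ((Real.tanh z - Real.tanh s) - 1 / Real.cosh s ^ 2 * (z - s) - (s - z) ^ 2) z := by
      intro z
      have h := ((cw_hd_D s z).sub
        (((((hasDerivAt_id z).sub_const s).pow 2).const_mul (1 / Real.cosh s ^ 2)).div_const 2)).add
        ((((hasDerivAt_const z s).sub (hasDerivAt_id z)).pow 3).div_const 3)
      refine h.congr_deriv ?_
      (try simp) <;> (try ring)
    have := cw_nonneg_Iic key s (by ring) (fun z hz => by
      have := cw_T1l s z hz
      show (Real.tanh z - Real.tanh s) - 1 / Real.cosh s ^ 2 * (z - s) - (s - z) ^ 2 ≤ 0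
      linarith) y h
    linarith

lemma cw_D_upper (s y : ℝ) :
    Real.log (Real.cosh y) - Real.log (Real.cosh s) - Real.tanh s * (y - s)
      ≤ 1 / Real.cosh s ^ 2 * (y - s) ^ 2 / 2 + |y - s| ^ 3 / 3 := by
  rcases le_total s y with h | h
  · rw [abs_of_nonneg (by linarith : (0:ℝ) ≤ y - s)]
    have key : ∀ z, HasDerivAt (fun z => 1 / Real.cosh s ^ 2 * (z - s) ^ 2 / 2 + (z - s) ^ 3 / 3
        - (Real.log (Real.cosh z) - Real.log (Real.cosh s) - Real.tanh s * (z - s)))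
        (1 / Real.cosh s ^ 2 * (z - s) + (z - s) ^ 2 - (Real.tanh z - Real.tanh s)) z := by
      intro z
      have h := (((((hasDerivAt_id z).sub_const s).pow 2).const_mul
        (1 / Real.cosh s ^ 2)).div_const 2).add
        ((((hasDerivAt_id z).sub_const s).pow 3).div_const 3) |>.sub (cw_hd_D s z)
      refine h.congr_deriv ?_
      (try simp) <;> (try ring)
    have := cw_nonneg_Ici key s (by ring) (fun z hz => by
      have := cw_T2r s z hz
      show (0:ℝ) ≤ 1 / Real.cosh s ^ 2 * (z - s) + (z - s) ^ 2 - (Real.tanh z - Real.tanh s)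
      linarith) y h
    linarith
  · rw [abs_of_nonpos (by linarith : y - s ≤ (0:ℝ))]
    have key : ∀ z, HasDerivAt (fun z => 1 / Real.cosh s ^ 2 * (z - s) ^ 2 / 2 + (s - z) ^ 3 / 3
        - (Real.log (Real.cosh z) - Real.log (Real.cosh s) - Real.tanh s * (z - s)))
        (1 / Real.cosh s ^ 2 * (z - s) - (s - z) ^ 2 - (Real.tanh z - Real.tanh s)) z := by
      intro z
      have h := (((((hasDerivAt_id z).sub_const s).pow 2).const_mul
        (1 / Real.cosh s ^ 2)).div_const 2).add
        ((((hasDerivAt_const z s).sub (hasDerivAt_id z)).pow 3).div_const 3) |>.sub (cw_hd_D s z)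
      refine h.congr_deriv ?_
      (try simp) <;> (try ring)
    have := cw_nonneg_Iic key s (by ring) (fun z hz => by
      have := cw_T2l s z hz
      show 1 / Real.cosh s ^ 2 * (z - s) - (s - z) ^ 2 - (Real.tanh z - Real.tanh s) ≤ 0
      linarith) y h
    linarith

lemma cw_h_pos (s : ℝ) (hs : s ≠ 0) :
    s ^ 2 / 2 * (1 / Real.cosh s ^ 2) < s * Real.tanh s - Real.log (Real.cosh s) := by
  set h : ℝ → ℝ := fun s => s * Real.tanh s - Real.log (Real.cosh s)
    - s ^ 2 / 2 * (1 / Real.cosh s ^ 2) with hh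
  have hd : ∀ z : ℝ, HasDerivAt h (z ^ 2 * Real.sinh z / Real.cosh z ^ 3) z := by
    intro z
    have h1 := ((hasDerivAt_id z).mul (cw_hd_tanh z)).sub (cw_hd_logcosh z)
    have h2 := (((hasDerivAt_id z).pow 2).div_const 2).mul (cw_hd_sech z)
    have h3 := h1.sub h2
    refine h3.congr_deriv ?_
    have hc : Real.cosh z ≠ 0 := (Real.cosh_pos z).ne'
    simp [Real.tanh_eq_sinh_div_cosh]
    field_simp
  have heven : ∀ z : ℝ, h (-z) = h z := by
    intro z
    simp only [hh, Real.tanh_neg, Real.cosh_neg, neg_sq]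
    ring
  have hmono : StrictMonoOn h (Set.Ici (0:ℝ)) := by
    refine strictMonoOn_of_deriv_pos (convex_Ici 0)
      (fun z _ => ((hd z).differentiableAt).continuousAt.continuousWithinAt) ?_
    intro z hz
    rw [interior_Ici] at hz
    rw [(hd z).deriv]
    have hz0 : 0 < z := hz
    have := Real.sinh_pos_iff.mpr hz0
    positivity
  have h0 : h 0 = 0 := by simp [hh]
  have key : ∀ z : ℝ, 0 < z → 0 < h z := by
    intro z hz
    have := hmono (Set.self_mem_Ici) (Set.mem_Ici.mpr hz.le) hz
    rwa [h0] at this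
  rcases lt_or_gt_of_ne hs with h' | h'
  · have := key (-s) (by linarith)
    rw [heven s] at this
    simp only [hh] at this; linarith
  · have := key s h'
    simp only [hh] at this; linarith


lemma cw_integral_Ioi (b : ℝ) (hb : 0 < b) :
    ∫ v in Set.Ioi (0:ℝ), v * Real.exp (-b * v ^ 2) = 1 / (2 * b) := by
  have hA : ∀ v ∈ Set.Ici (0:ℝ), HasDerivAt (fun v : ℝ => -(2 * b)⁻¹ * Real.exp (-b * v ^ 2))
      (v * Real.exp (-b * v ^ 2)) v := by
    intro v _
    have h := (((hasDerivAt_pow 2 v).const_mul (-b)).exp).const_mul (-(2 * b)⁻¹)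
    refine h.congr_deriv ?_
    field_simp
    ring
  have hint : IntegrableOn (fun v : ℝ => v * Real.exp (-b * v ^ 2)) (Set.Ioi 0) :=
    (integrable_mul_exp_neg_mul_sq hb).integrableOn
  have htend : Filter.Tendsto (fun v : ℝ => -(2 * b)⁻¹ * Real.exp (-b * v ^ 2))
      Filter.atTop (nhds (-(2 * b)⁻¹ * 0)) := by
    refine Filter.Tendsto.const_mul _ ?_
    have : Filter.Tendsto (fun v : ℝ => -b * v ^ 2) Filter.atTop Filter.atBot := by
      exact (Filter.tendsto_pow_atTop two_ne_zero).const_mul_atTop_of_neg (neg_lt_zero.2 hb)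
    exact Real.tendsto_exp_atBot.comp this
  have := integral_Ioi_of_hasDerivAt_of_tendsto' hA hint htend
  rw [this]
  norm_num

lemma cw_integral_abs (b : ℝ) (hb : 0 < b) :
    ∫ u : ℝ, |u| * Real.exp (-b * u ^ 2) = 1 / b := by
  have he : (fun u : ℝ => |u| * Real.exp (-b * u ^ 2))
      = fun u : ℝ => (fun v : ℝ => v * Real.exp (-b * v ^ 2)) |u| := by
    funext u; simp [sq_abs]
  rw [he, integral_comp_abs (f := fun v : ℝ => v * Real.exp (-b * v ^ 2)), cw_integral_Ioi b hb]
  try field_simp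
  try ring

lemma cw_integral_abs_shift (b s : ℝ) (hb : 0 < b) :
    ∫ y : ℝ, |y - s| * Real.exp (-b * (y - s) ^ 2) = 1 / b := by
  have := integral_sub_right_eq_self (μ := (volume : Measure ℝ)) (fun u : ℝ => |u| * Real.exp (-b * u ^ 2)) s
  rw [this, cw_integral_abs b hb]

lemma cw_integrable_abs_shift (b s : ℝ) (hb : 0 < b) :
    Integrable (fun y : ℝ => |y - s| * Real.exp (-b * (y - s) ^ 2)) := by
  have h := (integrable_mul_exp_neg_mul_sq hb).abs
  have he : (fun u : ℝ => |u * Real.exp (-b * u ^ 2)|)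
      = fun u : ℝ => |u| * Real.exp (-b * u ^ 2) := by
    funext u; rw [abs_mul, abs_of_pos (Real.exp_pos _)]
  rw [he] at h
  exact h.comp_sub_right s

lemma cw_integrable_exp_shift (b s : ℝ) (hb : 0 < b) :
    Integrable (fun y : ℝ => Real.exp (-b * (y - s) ^ 2)) :=
  (integrable_exp_neg_mul_sq hb).comp_sub_right s


private noncomputable def cwF (x t : ℝ) : ℝ → ℝ :=
  fun z => (x - z) ^ 2 / (2 * t) - Real.log 2 - Real.log (Real.cosh z)

lemma cwF_continuous (x t : ℝ) : Continuous (cwF x t) := by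
  unfold cwF
  have h : Continuous fun z : ℝ => Real.log (Real.cosh z) :=
    Real.continuous_cosh.log (fun z => (Real.cosh_pos z).ne')
  exact (((continuous_const.sub continuous_id).pow 2).div_const (2 * t)).sub
    continuous_const |>.sub h


lemma cwF_hasDerivAt (x t : ℝ) (ht : 0 < t) (z : ℝ) :
    HasDerivAt (cwF x t) ((z - x) / t - Real.tanh z) z := by
  have h1 := (((hasDerivAt_const z x).sub (hasDerivAt_id z)).pow 2).div_const (2 * t)
  have h2 := (h1.sub_const (Real.log 2)).sub (cw_hd_logcosh z)
  have he : cwF x t = fun z => ((x - z) ^ 2 / (2 * t) - Real.log 2) - Real.log (Real.cosh z) := by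
    funext z; unfold cwF; ring
  rw [he]
  refine h2.congr_deriv ?_
  have ht' : t ≠ 0 := ht.ne'
  field_simp
  simp only [Pi.sub_apply, id]
  ring

lemma cw_fo (x t : ℝ) (ht : 0 < t) (s : ℝ) (hmin : ∀ z, cwF x t s ≤ cwF x t z) :
    Real.tanh s = (s - x) / t := by
  have hloc : IsLocalMin (cwF x t) s := Filter.Eventually.of_forall hmin
  have h0 := hloc.deriv_eq_zero
  rw [(cwF_hasDerivAt x t ht s).deriv] at h0
  linarith [h0]

lemma cw_iden (x t : ℝ) (ht : 0 < t) (s : ℝ) (hmin : ∀ z, cwF x t s ≤ cwF x t z) :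
    ∀ y, cwF x t y - cwF x t s = (y - s) ^ 2 / (2 * t)
      - (Real.log (Real.cosh y) - Real.log (Real.cosh s) - Real.tanh s * (y - s)) := by
  intro y
  rw [cw_fo x t ht s hmin]
  unfold cwF
  have ht' : t ≠ 0 := ht.ne'
  field_simp
  ring

lemma cw_upper (x t : ℝ) (ht : 0 < t) (s : ℝ) (hmin : ∀ z, cwF x t s ≤ cwF x t z) :
    ∀ y, cwF x t y - cwF x t s ≤ (y - s) ^ 2 / (2 * t) := by
  intro y
  rw [cw_iden x t ht s hmin y]
  linarith [cw_D_nonneg s y]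

lemma cw_structure (x t : ℝ) (ht : 0 < t) (s : ℝ)
    (hmin : ∀ z, cwF x t s ≤ cwF x t z)
    (huniq : ∀ y', (∀ z, cwF x t y' ≤ cwF x t z) → y' = s)
    (hdeg : ¬(t = 1 ∧ x = 0)) :
    ∃ c : ℝ, 0 < c ∧ ∀ y, c * (y - s) ^ 2 ≤ cwF x t y - cwF x t s := by
  set a : ℝ := 1 / Real.cosh s ^ 2 with ha_def
  have hapos : 0 < a := by positivity
  have hiden := cw_iden x t ht s hmin
  have hG0 : ∀ y, 0 ≤ cwF x t y - cwF x t s := fun y => by linarith [hmin y]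
  -- a ≤ 1/t
  have ha_le : a ≤ 1 / t := by
    by_contra hcon
    push_neg at hcon
    set ε : ℝ := (a - 1 / t) / 2 with hε
    have hε0 : 0 < ε := by rw [hε]; linarith
    have h1 := hG0 (s + ε)
    have h2 := hiden (s + ε)
    have h3 := cw_D_lower s (s + ε)
    rw [show s + ε - s = ε by ring, abs_of_pos hε0] at h3
    rw [show s + ε - s = ε by ring] at h2
    have hkey : a = 1 / t + 2 * ε := by rw [hε]; ring
    have hbr : ε ^ 2 / (2 * t) = 1 / t * ε ^ 2 / 2 := by ring
    have hbr2 : 1 / Real.cosh s ^ 2 = a := ha_def.symm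
    rw [hbr2] at h3
    nlinarith [mul_pos (mul_pos hε0 hε0) hε0]
  -- a < 1/t
  have ha_lt : a < 1 / t := by
    rcases lt_or_eq_of_le ha_le with h | h
    · exact h
    · exfalso
      by_cases hs0 : s = 0
      · apply hdeg
        have h' : 1 / Real.cosh s ^ 2 = 1 / t := ha_def.symm.trans h
        rw [hs0, Real.cosh_zero] at h'
        have ht1 : t = 1 := by
          field_simp at h'
          linarith
        constructor
        · exact ht1
        · have hfo := cw_fo x t ht s hmin
          rw [hs0, Real.tanh_zero] at hfo
          have : (0 - x) / t = 0 := hfo.symm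
          field_simp at this
          linarith
      · have h1 := hG0 0
        have h2 := hiden 0
        have h3 := cw_h_pos s hs0
        rw [Real.cosh_zero, Real.log_one] at h2
        rw [← ha_def, h] at h3
        rw [show Real.tanh s * (0 - s) = -(s * Real.tanh s) by ring] at h2
        have hbr : ((0:ℝ) - s) ^ 2 / (2 * t) = s ^ 2 / 2 * (1 / t) := by ring
        rw [hbr] at h2
        linarith
  set c₂ : ℝ := 1 / t - a with hc₂
  have hc₂0 : 0 < c₂ := by rw [hc₂]; linarith
  set δ : ℝ := 3 * c₂ / 4 with hδ
  have hδ0 : 0 < δ := by rw [hδ]; linarith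
  set R : ℝ := 8 * t with hR
  have hR0 : 0 < R := by rw [hR]; linarith
  have hnear : ∀ y, |y - s| ≤ δ → c₂ / 4 * (y - s) ^ 2 ≤ cwF x t y - cwF x t s := by
    intro y hy
    have h1 := hiden y
    have h2 := cw_D_upper s y
    have h3 : |y - s| ^ 3 ≤ δ * (y - s) ^ 2 := by
      have : |y - s| ^ 3 = |y - s| * |y - s| ^ 2 := by ring
      rw [this, sq_abs]
      exact mul_le_mul_of_nonneg_right hy (sq_nonneg _)
    have key : (y - s) ^ 2 / (2 * t) = (1 / t) * (y - s) ^ 2 / 2 := by ring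
    have h4 : 1 / Real.cosh s ^ 2 * (y - s) ^ 2 / 2 = a * (y - s) ^ 2 / 2 := by rw [← ha_def]
    have e1 : c₂ * (y - s) ^ 2 = (1 / t) * (y - s) ^ 2 - a * (y - s) ^ 2 := by rw [hc₂]; ring
    have e2 : δ * (y - s) ^ 2 = 3 * (c₂ * (y - s) ^ 2) / 4 := by rw [hδ]; ring
    linarith [h1, h2, h3, e1, e2, key, h4]
  have hfar : ∀ y, R ≤ |y - s| → 1 / (4 * t) * (y - s) ^ 2 ≤ cwF x t y - cwF x t s := by
    intro y hy
    have h1 := hiden y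
    have h2 := cw_D_le_lin s y
    have h3 : (y - s) ^ 2 ≥ R * |y - s| := by
      rw [← sq_abs]
      nlinarith [abs_nonneg (y - s)]
    have hprod : (1 / (4 * t)) * (R * |y - s|) ≤ (1 / (4 * t)) * (y - s) ^ 2 :=
      mul_le_mul_of_nonneg_left h3 (by positivity)
    have e4 : 1 / (4 * t) * (R * |y - s|) = 2 * |y - s| := by
      rw [hR]; field_simp; ring
    have e5 : (y - s) ^ 2 / (2 * t) = 2 * (1 / (4 * t) * (y - s) ^ 2) := by ring
    linarith [h1, h2, hprod, e4, e5]
  by_cases hδR : R ≤ δ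
  · refine ⟨min (c₂ / 4) (1 / (4 * t)), by positivity, fun y => ?_⟩
    rcases le_total |y - s| δ with h | h
    · calc min (c₂ / 4) (1 / (4 * t)) * (y - s) ^ 2
          ≤ c₂ / 4 * (y - s) ^ 2 :=
            mul_le_mul_of_nonneg_right (min_le_left _ _) (sq_nonneg _)
        _ ≤ _ := hnear y h
    · calc min (c₂ / 4) (1 / (4 * t)) * (y - s) ^ 2
          ≤ 1 / (4 * t) * (y - s) ^ 2 :=
            mul_le_mul_of_nonneg_right (min_le_right _ _) (sq_nonneg _)
        _ ≤ _ := hfar y (le_trans hδR h)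
  · push_neg at hδR
    set K : Set ℝ := Set.Icc (s - R) (s + R) ∩ {y | δ ≤ |y - s|} with hK
    have hKcl : IsClosed {y : ℝ | δ ≤ |y - s|} :=
      isClosed_le continuous_const (continuous_id.sub continuous_const).abs
    have hKc : IsCompact K := isCompact_Icc.inter_right hKcl
    have hKne : K.Nonempty := by
      refine ⟨s + δ, ⟨⟨by linarith, by linarith⟩, ?_⟩⟩
      simp only [Set.mem_setOf_eq, add_sub_cancel_left]
      rw [abs_of_pos hδ0]
    have hGcont : Continuous (fun y => cwF x t y - cwF x t s) :=
      (cwF_continuous x t).sub continuous_const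
    obtain ⟨y₀, hy₀K, hy₀min⟩ := hKc.exists_isMinOn hKne hGcont.continuousOn
    have hy₀ne : y₀ ≠ s := by
      intro hcon
      have := hy₀K.2
      rw [hcon] at this
      simp only [Set.mem_setOf_eq, sub_self, abs_zero] at this
      linarith
    have hmpos : 0 < cwF x t y₀ - cwF x t s := by
      rcases lt_or_eq_of_le (hG0 y₀) with h | h
      · exact h
      · exfalso
        apply hy₀ne
        apply huniq
        intro z
        have : cwF x t y₀ = cwF x t s := by linarith
        rw [this]
        exact hmin z
    set m : ℝ := cwF x t y₀ - cwF x t s with hm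
    refine ⟨min (min (c₂ / 4) (1 / (4 * t))) (m / R ^ 2), by positivity, fun y => ?_⟩
    by_cases h1 : |y - s| ≤ δ
    · calc min (min (c₂ / 4) (1 / (4 * t))) (m / R ^ 2) * (y - s) ^ 2
          ≤ c₂ / 4 * (y - s) ^ 2 := by
            apply mul_le_mul_of_nonneg_right _ (sq_nonneg _)
            exact le_trans (min_le_left _ _) (min_le_left _ _)
        _ ≤ _ := hnear y h1
    · by_cases h2 : R ≤ |y - s|
      · calc min (min (c₂ / 4) (1 / (4 * t))) (m / R ^ 2) * (y - s) ^ 2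
            ≤ 1 / (4 * t) * (y - s) ^ 2 := by
              apply mul_le_mul_of_nonneg_right _ (sq_nonneg _)
              exact le_trans (min_le_left _ _) (min_le_right _ _)
          _ ≤ _ := hfar y h2
      · push_neg at h1 h2
        have hyK : y ∈ K := by
          constructor
          · rw [Set.mem_Icc]
            have := abs_le.mp h2.le
            constructor <;> linarith [this.1, this.2]
          · exact le_of_lt h1
        have hGy : m ≤ cwF x t y - cwF x t s := isMinOn_iff.mp hy₀min y hyK
        have hsq : (y - s) ^ 2 ≤ R ^ 2 := by
          rw [← sq_abs]
          nlinarith [abs_nonneg (y - s), h2.le]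
        calc min (min (c₂ / 4) (1 / (4 * t))) (m / R ^ 2) * (y - s) ^ 2
            ≤ m / R ^ 2 * (y - s) ^ 2 :=
              mul_le_mul_of_nonneg_right (min_le_right _ _) (sq_nonneg _)
          _ ≤ m := by
              rw [div_mul_eq_mul_div, div_le_iff₀ (by positivity)]
              exact mul_le_mul_of_nonneg_left hsq hmpos.le
          _ ≤ _ := hGy


lemma cw_main (x t : ℝ) (ht : 0 < t) (s : ℝ) (c : ℝ) (hc0 : 0 < c)
    (hup : ∀ y, cwF x t y - cwF x t s ≤ (y - s) ^ 2 / (2 * t))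
    (hlow : ∀ y, c * (y - s) ^ 2 ≤ cwF x t y - cwF x t s) :
    ∀ N : ℕ, 1 ≤ N →
      |(∫ y : ℝ, ((x - y) / t) * Real.exp (-(N : ℝ) * cwF x t y))
        / (∫ y : ℝ, Real.exp (-(N : ℝ) * cwF x t y)) - (x - s) / t|
      ≤ (Real.exp (1 / (2 * t)) / (2 * t * c)) / Real.sqrt N := by
  intro N hN
  have hn1 : (1 : ℝ) ≤ (N : ℝ) := by exact_mod_cast hN
  have hn0 : (0 : ℝ) < (N : ℝ) := lt_of_lt_of_le one_pos hn1
  set n : ℝ := (N : ℝ)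
  have hGnonneg : ∀ y, 0 ≤ cwF x t y - cwF x t s := fun y => le_trans (by positivity) (hlow y)
  have hgb : ∀ y, Real.exp (-n * (cwF x t y - cwF x t s)) ≤ Real.exp (-c * (y - s) ^ 2) := by
    intro y
    apply Real.exp_le_exp.mpr
    nlinarith [sq_nonneg (y - s), hGnonneg y, hlow y]
  have hgbn : ∀ y, Real.exp (-n * (cwF x t y - cwF x t s))
      ≤ Real.exp (-(n * c) * (y - s) ^ 2) := by
    intro y
    apply Real.exp_le_exp.mpr
    nlinarith [hlow y]
  have hexpcont : Continuous (fun y => Real.exp (-n * (cwF x t y - cwF x t s))) :=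
    Real.continuous_exp.comp (continuous_const.mul ((cwF_continuous x t).sub continuous_const))
  have hexppos : ∀ y, 0 < Real.exp (-n * (cwF x t y - cwF x t s)) := fun y => Real.exp_pos _
  -- integrability
  have Ig : Integrable (fun y => Real.exp (-n * (cwF x t y - cwF x t s))) := by
    refine Integrable.mono' (cw_integrable_exp_shift c s hc0) hexpcont.aestronglyMeasurable ?_
    filter_upwards with y
    rw [Real.norm_eq_abs, abs_of_pos (hexppos y)]
    exact hgb y
  have I1 : Integrable (fun y => (y - s) * Real.exp (-n * (cwF x t y - cwF x t s))) := by
    refine Integrable.mono' (cw_integrable_abs_shift c s hc0)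
      (((continuous_id.sub continuous_const).mul hexpcont).aestronglyMeasurable) ?_
    filter_upwards with y
    rw [Real.norm_eq_abs, abs_mul, abs_of_pos (hexppos y)]
    exact mul_le_mul_of_nonneg_left (hgb y) (abs_nonneg _)
  have Iabs : Integrable (fun y => |y - s| * Real.exp (-n * (cwF x t y - cwF x t s))) := by
    refine Integrable.mono' (cw_integrable_abs_shift c s hc0)
      (((continuous_id.sub continuous_const).abs.mul hexpcont).aestronglyMeasurable) ?_
    filter_upwards with y
    rw [Real.norm_eq_abs, abs_mul, abs_of_pos (hexppos y), abs_abs]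
    exact mul_le_mul_of_nonneg_left (hgb y) (abs_nonneg _)
  have Inum : Integrable (fun y => ((x - y) / t) * Real.exp (-n * (cwF x t y - cwF x t s))) := by
    have he : (fun y => ((x - y) / t) * Real.exp (-n * (cwF x t y - cwF x t s)))
        = fun y => ((x - s) / t) * Real.exp (-n * (cwF x t y - cwF x t s))
          - (1 / t) * ((y - s) * Real.exp (-n * (cwF x t y - cwF x t s))) := by
      funext y; field_simp; ring
    rw [he]
    exact (Ig.const_mul _).sub (I1.const_mul _)
  have Iv : Integrable (fun y => ((s - y) / t) * Real.exp (-n * (cwF x t y - cwF x t s))) := by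
    have he : (fun y => ((s - y) / t) * Real.exp (-n * (cwF x t y - cwF x t s)))
        = fun y => (-(1 / t)) * ((y - s) * Real.exp (-n * (cwF x t y - cwF x t s))) := by
      funext y; field_simp; ring
    rw [he]
    exact I1.const_mul _
  -- factor out exp(-n * F s)
  set k : ℝ := Real.exp (-n * cwF x t s) with hk
  have hkpos : 0 < k := Real.exp_pos _
  have hfac : ∀ y, Real.exp (-n * cwF x t y)
      = k * Real.exp (-n * (cwF x t y - cwF x t s)) := by
    intro y
    rw [hk, ← Real.exp_add]
    congr 1
    ring
  have hden : (∫ y : ℝ, Real.exp (-n * cwF x t y))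
      = k * ∫ y : ℝ, Real.exp (-n * (cwF x t y - cwF x t s)) := by
    simp_rw [hfac]
    exact integral_const_mul k _
  have hnum : (∫ y : ℝ, ((x - y) / t) * Real.exp (-n * cwF x t y))
      = k * ∫ y : ℝ, ((x - y) / t) * Real.exp (-n * (cwF x t y - cwF x t s)) := by
    have : ∀ y : ℝ, ((x - y) / t) * Real.exp (-n * cwF x t y)
        = k * (((x - y) / t) * Real.exp (-n * (cwF x t y - cwF x t s))) := by
      intro y; rw [hfac y]; ring
    simp_rw [this]
    exact integral_const_mul k _
  set Z : ℝ := ∫ y : ℝ, Real.exp (-n * (cwF x t y - cwF x t s)) with hZ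
  set W : ℝ := ∫ y : ℝ, ((x - y) / t) * Real.exp (-n * (cwF x t y - cwF x t s)) with hW
  set V : ℝ := ∫ y : ℝ, ((s - y) / t) * Real.exp (-n * (cwF x t y - cwF x t s)) with hV
  -- lower bound for Z
  set r : ℝ := (Real.sqrt n)⁻¹ with hr
  have hsq : 0 < Real.sqrt n := Real.sqrt_pos.mpr hn0
  have hr0 : 0 < r := by positivity
  have hrsq : n * r ^ 2 = 1 := by
    rw [hr]
    rw [inv_pow, Real.sq_sqrt hn0.le]
    field_simp
  have hconst : ∀ y ∈ Set.Icc (s - r) (s + r),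
      Real.exp (-(1 / (2 * t))) ≤ Real.exp (-n * (cwF x t y - cwF x t s)) := by
    intro y hy
    apply Real.exp_le_exp.mpr
    have h1 : (y - s) ^ 2 ≤ r ^ 2 := by
      rcases hy with ⟨hy1, hy2⟩
      have : |y - s| ≤ r := by rw [abs_le]; constructor <;> linarith
      calc (y - s) ^ 2 = |y - s| ^ 2 := (sq_abs _).symm
        _ ≤ r ^ 2 := by nlinarith [abs_nonneg (y - s)]
    have h2 := hup y
    have h3 : n * (cwF x t y - cwF x t s) ≤ n * ((y - s) ^ 2 / (2 * t)) :=
      mul_le_mul_of_nonneg_left h2 hn0.le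
    have h4 : n * ((y - s) ^ 2 / (2 * t)) ≤ n * (r ^ 2 / (2 * t)) := by
      apply mul_le_mul_of_nonneg_left _ hn0.le
      apply div_le_div_of_nonneg_right h1 (by positivity) |>.trans_eq rfl
    have h5 : n * (r ^ 2 / (2 * t)) = 1 / (2 * t) := by
      field_simp
      nlinarith [hrsq]
    linarith
  have hZlow : Real.exp (-(1 / (2 * t))) * (2 * r) ≤ Z := by
    have h1 := setIntegral_ge_of_const_le (μ := volume) (s := Set.Icc (s - r) (s + r))
      measurableSet_Icc (by rw [Real.volume_Icc]; exact ENNReal.ofReal_ne_top)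
      hconst Ig.integrableOn
    have h2 : (volume.real (Set.Icc (s - r) (s + r))) = 2 * r := by
      rw [Real.volume_real_Icc_of_le (by linarith)]
      ring
    rw [h2, smul_eq_mul, mul_comm] at h1
    have h3 := setIntegral_le_integral (s := Set.Icc (s - r) (s + r)) Ig
      (Filter.Eventually.of_forall (fun y => (hexppos y).le))
    calc Real.exp (-(1 / (2 * t))) * (2 * r)
        ≤ ∫ y in Set.Icc (s - r) (s + r), Real.exp (-n * (cwF x t y - cwF x t s)) := h1
      _ ≤ Z := h3
  have hZpos : 0 < Z := lt_of_lt_of_le (by positivity) hZlow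
  -- numerator bound
  have hWV : W = ((x - s) / t) * Z + V := by
    rw [hW, hV, hZ, ← integral_const_mul, ← integral_add (Ig.const_mul _) Iv]
    congr 1
    funext y
    field_simp
    ring
  have hVabs : |V| ≤ (1 / t) * (1 / (n * c)) := by
    have h1 : |V| ≤ ∫ y : ℝ, |((s - y) / t) * Real.exp (-n * (cwF x t y - cwF x t s))| := by
      rw [hV]
      have := norm_integral_le_integral_norm (μ := (volume : Measure ℝ))
        (fun y : ℝ => ((s - y) / t) * Real.exp (-n * (cwF x t y - cwF x t s)))
      simp only [Real.norm_eq_abs] at this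
      exact this
    have h2 : (fun y : ℝ => |((s - y) / t) * Real.exp (-n * (cwF x t y - cwF x t s))|)
        = fun y : ℝ => (1 / t) * (|y - s| * Real.exp (-n * (cwF x t y - cwF x t s))) := by
      funext y
      rw [abs_mul, abs_of_pos (hexppos y), abs_div, abs_of_pos ht, abs_sub_comm]
      ring
    rw [h2] at h1
    have h3 : (∫ y : ℝ, (1 / t) * (|y - s| * Real.exp (-n * (cwF x t y - cwF x t s))))
        = (1 / t) * ∫ y : ℝ, |y - s| * Real.exp (-n * (cwF x t y - cwF x t s)) :=
      integral_const_mul _ _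
    rw [h3] at h1
    have h4 : (∫ y : ℝ, |y - s| * Real.exp (-n * (cwF x t y - cwF x t s)))
        ≤ ∫ y : ℝ, |y - s| * Real.exp (-(n * c) * (y - s) ^ 2) := by
      apply integral_mono Iabs (cw_integrable_abs_shift (n * c) s (by positivity))
      intro y
      exact mul_le_mul_of_nonneg_left (hgbn y) (abs_nonneg _)
    rw [cw_integral_abs_shift (n * c) s (by positivity)] at h4
    have h5 : (0:ℝ) < 1 / t := by positivity
    calc |V| ≤ (1 / t) * ∫ y : ℝ, |y - s| * Real.exp (-n * (cwF x t y - cwF x t s)) := h1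
      _ ≤ (1 / t) * (1 / (n * c)) := by
          apply mul_le_mul_of_nonneg_left h4 h5.le
  -- combine
  have hfinal : |W / Z - (x - s) / t| ≤ (Real.exp (1 / (2 * t)) / (2 * t * c)) / Real.sqrt n := by
    have h1 : W / Z - (x - s) / t = V / Z := by
      rw [hWV]
      field_simp
      try ring
    rw [h1, abs_div, abs_of_pos hZpos]
    have h2 : |V| / Z ≤ ((1 / t) * (1 / (n * c))) / (Real.exp (-(1 / (2 * t))) * (2 * r)) := by
      apply div_le_div₀ (by positivity) hVabs (by positivity) hZlow
    refine h2.trans (le_of_eq ?_)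
    have hnsqrt : Real.sqrt n * Real.sqrt n = n := Real.mul_self_sqrt hn0.le
    set S : ℝ := Real.sqrt n with hS
    have hE : Real.exp (-(1 / (2 * t))) = (Real.exp (1 / (2 * t)))⁻¹ := Real.exp_neg _
    rw [hE, hr, show n = S * S from hnsqrt.symm]
    have hEpos : (0:ℝ) < Real.exp (1 / (2 * t)) := Real.exp_pos _
    field_simp
  rw [hnum, hden, mul_div_mul_left _ _ (ne_of_gt hkpos)]
  exact hfinal


/-- Fix `x ∈ ℝ` and `t > 0` such that the minimizer `y⋆` of
`y ↦ (x-y)²/(2t) - log 2 - log cosh y` is unique.  Then the finite-`N` velocity field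
`u_N(x,t) = [∫ ((x-y)/t) e^{-N F(y)} dy] / [∫ e^{-N F(y)} dy]`, with
`F(y) = (x-y)²/(2t) - log 2 - log cosh y`, converges to `u(x,t) = (x - y⋆)/t`
with error at most `C/√N`. -/
theorem cwVelocity_converges (x t : ℝ) (ht : 0 < t) (ystar : ℝ)
    (hmin : ∀ z : ℝ, (x - ystar) ^ 2 / (2 * t) - Real.log 2 - Real.log (Real.cosh ystar)
      ≤ (x - z) ^ 2 / (2 * t) - Real.log 2 - Real.log (Real.cosh z))
    (huniq : ∀ y' : ℝ,
      (∀ z : ℝ, (x - y') ^ 2 / (2 * t) - Real.log 2 - Real.log (Real.cosh y')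
        ≤ (x - z) ^ 2 / (2 * t) - Real.log 2 - Real.log (Real.cosh z)) → y' = ystar) :
    ∃ C : ℝ, 0 < C ∧ ∀ N : ℕ, 1 ≤ N →
      |(∫ y : ℝ, ((x - y) / t) * Real.exp
            (-(N : ℝ) * ((x - y) ^ 2 / (2 * t) - Real.log 2 - Real.log (Real.cosh y))))
        / (∫ y : ℝ, Real.exp
            (-(N : ℝ) * ((x - y) ^ 2 / (2 * t) - Real.log 2 - Real.log (Real.cosh y))))
        - (x - ystar) / t|
      ≤ C / Real.sqrt N := by
  have hFr : ∀ (u v : ℝ), (u - v) ^ 2 / (2 * t) - Real.log 2 - Real.log (Real.cosh v)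
      = cwF u t v := fun u v => rfl
  simp only [hFr] at hmin huniq ⊢
  by_cases hdeg : t = 1 ∧ x = 0
  · obtain ⟨ht1, hx0⟩ := hdeg
    subst ht1; subst hx0
    have hFeven : ∀ y : ℝ, cwF 0 1 (-y) = cwF 0 1 y := by
      intro y; unfold cwF; rw [Real.cosh_neg]; ring_nf
    have hs0 : ystar = 0 := by
      have hminneg : ∀ z, cwF 0 1 (-ystar) ≤ cwF 0 1 z := by
        intro z
        rw [hFeven ystar]
        exact hmin z
      have := huniq (-ystar) hminneg
      linarith
    refine ⟨1, one_pos, fun N hN => ?_⟩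
    have hodd : (∫ y : ℝ, ((0 - y) / 1) * Real.exp (-(N:ℝ) * cwF 0 1 y)) = 0 := by
      set f : ℝ → ℝ := fun y => ((0 - y) / 1) * Real.exp (-(N:ℝ) * cwF 0 1 y) with hf
      have h1 : ∫ y : ℝ, f (-y) = ∫ y : ℝ, f y := integral_neg_eq_self f volume
      have h2 : ∀ y, f (-y) = - f y := by
        intro y
        rw [hf]
        simp only
        rw [hFeven]
        ring
      have h3 : (∫ y : ℝ, f (-y)) = - ∫ y : ℝ, f y := by
        simp_rw [h2]
        exact integral_neg f
      have : (∫ y : ℝ, f y) = 0 := by linarith [h1, h3]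
      exact this
    rw [hs0, hodd]
    have hz : (0:ℝ) / (∫ y : ℝ, Real.exp (-(N:ℝ) * cwF 0 1 y)) - ((0:ℝ) - 0) / 1 = 0 := by
      norm_num
    rw [hz, abs_zero]
    positivity
  · obtain ⟨c, hc0, hlow⟩ := cw_structure x t ht ystar hmin (fun y' h => huniq y' h) hdeg
    have hup := cw_upper x t ht ystar hmin
    exact ⟨Real.exp (1 / (2 * t)) / (2 * t * c), by positivity,
      cw_main x t ht ystar c hc0 hup hlow⟩
end

section
/- (Hubbard–Stratonovich identity for the Curie–Weiss partition function.) For every integer N ≥ 1, every x ∈ ℝ and every t > 0, one has ∑_{σ ∈ {−1,1}^N} exp( (t/(2N)) (∑_{i=1}^N σ_i)² + x ∑_{i=1}^N σ_i ) = √(N/(2π t)) · ∫_ℝ exp( −N (x−y)²/(2t) ) · (2 cosh y)^N dy. -/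
open Real MeasureTheory

lemma hs_complete_square (c x s : ℝ) (hc : 0 < c) (y : ℝ) :
    -c * (x - y) ^ 2 + s * y = -c * (y - (x + s / (2 * c))) ^ 2 + (s ^ 2 / (4 * c) + x * s) := by
  field_simp
  ring

lemma hs_integrable (c x s : ℝ) (hc : 0 < c) :
    Integrable (fun y : ℝ => Real.exp (-c * (x - y) ^ 2 + s * y)) := by
  have h := (integrable_exp_neg_mul_sq hc).comp_sub_right (x + s / (2 * c))
  have h2 := h.mul_const (Real.exp (s ^ 2 / (4 * c) + x * s))
  refine h2.congr (Filter.Eventually.of_forall fun y => ?_)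
  simp only [← Real.exp_add, hs_complete_square c x s hc y]

lemma hs_gauss (c x s : ℝ) (hc : 0 < c) :
    ∫ y : ℝ, Real.exp (-c * (x - y) ^ 2 + s * y)
      = Real.sqrt (π / c) * Real.exp (s ^ 2 / (4 * c) + x * s) := by
  simp_rw [hs_complete_square c x s hc, Real.exp_add, integral_mul_const]
  rw [integral_sub_right_eq_self (fun y => Real.exp (-c * y ^ 2)) (x + s / (2 * c)),
    integral_gaussian]

/-- **Hubbard–Stratonovich identity for the Curie–Weiss partition function.**
For every `N ≥ 1`, `x ∈ ℝ` and `t > 0`,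
`∑_{σ ∈ {-1,1}^N} exp((t/(2N))(∑ᵢ σᵢ)² + x ∑ᵢ σᵢ)
  = √(N/(2πt)) ∫ exp(-N(x-y)²/(2t)) (2 cosh y)^N dy`. -/
theorem hubbard_stratonovich (N : ℕ) (hN : 1 ≤ N) (x t : ℝ) (ht : 0 < t) :
    ∑ σ : Fin N → ({-1, 1} : Finset ℝ),
        Real.exp ((t / (2 * N)) * (∑ i, (σ i : ℝ)) ^ 2 + x * ∑ i, (σ i : ℝ))
      = Real.sqrt ((N : ℝ) / (2 * π * t)) *
          ∫ y : ℝ, Real.exp (-(N : ℝ) * (x - y) ^ 2 / (2 * t)) * (2 * Real.cosh y) ^ N := by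
  have hNpos : (0 : ℝ) < N := by exact_mod_cast Nat.lt_of_lt_of_le Nat.zero_lt_one hN
  set c : ℝ := (N : ℝ) / (2 * t) with hc_def
  have hc : 0 < c := by positivity
  have hexp : ∀ y : ℝ, -(N : ℝ) * (x - y) ^ 2 / (2 * t) = -c * (x - y) ^ 2 := by
    intro y; rw [hc_def]; ring
  have hcosh : ∀ y : ℝ, (2 * Real.cosh y) ^ N
      = ∑ σ : Fin N → ({-1, 1} : Finset ℝ), Real.exp ((∑ i, (σ i : ℝ)) * y) := by
    intro y
    have h2 : 2 * Real.cosh y = ∑ a : ({-1, 1} : Finset ℝ), Real.exp ((a : ℝ) * y) := by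
      rw [Finset.sum_coe_sort _ (fun a : ℝ => Real.exp (a * y)),
        Finset.sum_pair (by norm_num : (-1 : ℝ) ≠ 1), Real.cosh_eq]
      rw [neg_one_mul, one_mul]
      ring
    rw [h2, Fintype.sum_pow]
    refine Finset.sum_congr rfl fun σ _ => ?_
    rw [Finset.sum_mul, Real.exp_sum]
  calc ∑ σ : Fin N → ({-1, 1} : Finset ℝ),
        Real.exp ((t / (2 * N)) * (∑ i, (σ i : ℝ)) ^ 2 + x * ∑ i, (σ i : ℝ))
      = ∑ σ : Fin N → ({-1, 1} : Finset ℝ), Real.sqrt ((N : ℝ) / (2 * π * t)) *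
          ∫ y : ℝ, Real.exp (-c * (x - y) ^ 2 + (∑ i, (σ i : ℝ)) * y) := by
        refine Finset.sum_congr rfl fun σ _ => ?_
        rw [hs_gauss c x _ hc, ← mul_assoc, ← Real.sqrt_mul (by positivity)]
        have h1 : (N : ℝ) / (2 * π * t) * (π / c) = 1 := by
          rw [hc_def]; field_simp
        rw [h1, Real.sqrt_one, one_mul]
        congr 1
        rw [hc_def]; field_simp; ring
    _ = Real.sqrt ((N : ℝ) / (2 * π * t)) * ∑ σ : Fin N → ({-1, 1} : Finset ℝ),
          ∫ y : ℝ, Real.exp (-c * (x - y) ^ 2 + (∑ i, (σ i : ℝ)) * y) := by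
        rw [Finset.mul_sum]
    _ = Real.sqrt ((N : ℝ) / (2 * π * t)) *
          ∫ y : ℝ, Real.exp (-(N : ℝ) * (x - y) ^ 2 / (2 * t)) * (2 * Real.cosh y) ^ N := by
        congr 1
        rw [← integral_finset_sum _ (fun σ _ => hs_integrable c x _ hc)]
        refine integral_congr_ae (Filter.Eventually.of_forall fun y => ?_)
        dsimp only
        rw [hcosh y, Finset.mul_sum]
        refine Finset.sum_congr rfl fun σ _ => ?_
        rw [← Real.exp_add, hexp y]
end

section
/- (Spontaneous ℤ₂ symmetry breaking / shock formation.) For t > 0 consider F_t(y) = y²/(2t) − log cosh y on ℝ. If 0 < t ≤ 1, then y = 0 is the unique global minimizer of F_t, and y = 0 is the only solution of y = t·tanh y. If t > 1, then the equation y = t·tanh y has exactly one solution y*(t) > 0, and the set of global minimizers of F_t is exactly { y*(t), −y*(t) }; in particular the Hopf–Lax minimizer at x = 0 is non-unique for every t > 1. -/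
open Real
open Set

lemma CW.hasDerivAt_tanh (x : ℝ) :
    HasDerivAt Real.tanh (1 - Real.tanh x ^ 2) x := by
  have h : HasDerivAt (fun y => Real.sinh y / Real.cosh y)
      ((Real.cosh x * Real.cosh x - Real.sinh x * Real.sinh x) / Real.cosh x ^ 2) x :=
    (Real.hasDerivAt_sinh x).div (Real.hasDerivAt_cosh x) (Real.cosh_pos x).ne'
  have hfun : Real.tanh = fun y => Real.sinh y / Real.cosh y :=
    funext fun y => Real.tanh_eq_sinh_div_cosh y
  have heq : (Real.cosh x * Real.cosh x - Real.sinh x * Real.sinh x) / Real.cosh x ^ 2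
      = 1 - Real.tanh x ^ 2 := by
    have h1 := Real.cosh_sq_sub_sinh_sq x
    have h2 := (Real.cosh_pos x).ne'
    rw [Real.tanh_eq_sinh_div_cosh, div_pow]
    field_simp
  have heq' : (Real.cosh x * Real.cosh x - Real.sinh x * Real.sinh x) / Real.cosh x ^ 2
      = 1 - (Real.sinh x / Real.cosh x) ^ 2 := by
    rw [heq, Real.tanh_eq_sinh_div_cosh]
  rw [hfun]
  show HasDerivAt _ (1 - (Real.sinh x / Real.cosh x) ^ 2) x
  rw [← heq']
  exact h

lemma CW.continuous_tanh : Continuous Real.tanh :=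
  Differentiable.continuous fun x => (CW.hasDerivAt_tanh x).differentiableAt

lemma CW.one_sub_tanh_sq_pos (x : ℝ) : 0 < 1 - Real.tanh x ^ 2 := by
  have h1 := Real.cosh_sq_sub_sinh_sq x
  have h2 := Real.cosh_pos x
  rw [Real.tanh_eq_sinh_div_cosh, div_pow]
  rw [sub_pos, div_lt_one (by positivity)]
  nlinarith

lemma CW.tanh_pos {x : ℝ} (hx : 0 < x) : 0 < Real.tanh x := by
  rw [Real.tanh_eq_sinh_div_cosh]
  exact div_pos (by rwa [Real.sinh_pos_iff]) (Real.cosh_pos x)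

lemma CW.tanh_lt_one (x : ℝ) : Real.tanh x < 1 := by
  rw [Real.tanh_eq_sinh_div_cosh, div_lt_one (Real.cosh_pos x)]
  have := Real.cosh_sub_sinh x
  nlinarith [Real.exp_pos (-x)]

lemma CW.tanh_lt_self {x : ℝ} (hx : 0 < x) : Real.tanh x < x := by
  have hmono : StrictMonoOn (fun y => y - Real.tanh y) (Ici (0:ℝ)) := by
    apply strictMonoOn_of_deriv_pos (convex_Ici 0)
    · exact (continuous_id.sub CW.continuous_tanh).continuousOn
    · intro y hy
      rw [interior_Ici] at hy
      have hd : HasDerivAt (fun y : ℝ => y - Real.tanh y) (1 - (1 - Real.tanh y ^ 2)) y :=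
        (hasDerivAt_id y).sub (CW.hasDerivAt_tanh y)
      rw [hd.deriv]
      have := CW.tanh_pos hy
      nlinarith
  have := hmono (Set.self_mem_Ici) (mem_Ici.2 hx.le) hx
  simpa using this

lemma CW.log_cosh_lt {x : ℝ} (hx : x ≠ 0) : Real.log (Real.cosh x) < x ^ 2 / 2 := by
  have key : ∀ y : ℝ, 0 < y → Real.log (Real.cosh y) < y ^ 2 / 2 := by
    intro y hy
    have hmono : StrictMonoOn (fun z => z ^ 2 / 2 - Real.log (Real.cosh z)) (Ici (0:ℝ)) := by
      apply strictMonoOn_of_deriv_pos (convex_Ici 0)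
      · have : Continuous fun z : ℝ => z ^ 2 / 2 - Real.log (Real.cosh z) :=
          ((continuous_pow 2).div_const 2).sub
            (Real.continuous_cosh.log fun z => (Real.cosh_pos z).ne')
        exact this.continuousOn
      · intro z hz
        rw [interior_Ici] at hz
        have hd : HasDerivAt (fun z : ℝ => z ^ 2 / 2 - Real.log (Real.cosh z))
            (2 * z ^ 1 / 2 - Real.sinh z / Real.cosh z) z :=
          ((hasDerivAt_pow 2 z).div_const 2).sub
            ((Real.hasDerivAt_cosh z).log (Real.cosh_pos z).ne')
        rw [hd.deriv]
        have := CW.tanh_lt_self hz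
        rw [Real.tanh_eq_sinh_div_cosh] at this
        simp only [pow_one]
        linarith
    have := hmono Set.self_mem_Ici (mem_Ici.2 hy.le) hy
    simp only [ne_eq, zero_pow, Real.cosh_zero, Real.log_one] at this
    simpa using this
  rcases hx.lt_or_gt with h | h
  · have := key (-x) (by linarith)
    simpa [Real.cosh_neg] using this
  · exact key x h

lemma CW.tanh_strictConcave : StrictConcaveOn ℝ (Ici (0:ℝ)) Real.tanh := by
  apply strictConcaveOn_of_deriv2_neg (convex_Ici 0) CW.continuous_tanh.continuousOn
  intro x hx
  rw [interior_Ici] at hx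
  have hd : deriv Real.tanh = fun y => 1 - Real.tanh y ^ 2 :=
    funext fun y => (CW.hasDerivAt_tanh y).deriv
  have h2 : HasDerivAt (fun y => 1 - Real.tanh y ^ 2)
      (-(2 * Real.tanh x ^ 1 * (1 - Real.tanh x ^ 2))) x :=
    (((CW.hasDerivAt_tanh x).pow 2)).const_sub 1
  have : deriv (deriv Real.tanh) x = -(2 * Real.tanh x ^ 1 * (1 - Real.tanh x ^ 2)) := by
    rw [hd, h2.deriv]
  simp only [Function.iterate_succ, Function.iterate_zero, Function.comp_apply, id_eq]
  rw [this]
  have := CW.tanh_pos hx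
  have := CW.one_sub_tanh_sq_pos x
  nlinarith

lemma CW.key {u v : ℝ} (hu : 0 < u) (huv : u < v) :
    u / v * Real.tanh v < Real.tanh u := by
  have hv : 0 < v := hu.trans huv
  have ha : 0 < u / v := div_pos hu hv
  have hb : 0 < 1 - u / v := by
    rw [sub_pos, div_lt_one hv]; exact huv
  have h := CW.tanh_strictConcave.2 (mem_Ici.2 hv.le) (mem_Ici.2 le_rfl)
    hv.ne' ha hb (by ring)
  simp only [smul_eq_mul, mul_zero, add_zero, Real.tanh_zero] at h
  rwa [div_mul_cancel₀ _ hv.ne'] at h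

private noncomputable def CW.F (t y : ℝ) : ℝ := y ^ 2 / (2 * t) - Real.log (Real.cosh y)

lemma CW.F_neg (t y : ℝ) : CW.F t (-y) = CW.F t y := by
  simp [CW.F, Real.cosh_neg, neg_sq]

lemma CW.hasDerivAt_F (t : ℝ) (ht : 0 < t) (y : ℝ) :
    HasDerivAt (CW.F t) (y / t - Real.tanh y) y := by
  have hd : HasDerivAt (CW.F t) (2 * y ^ 1 / (2 * t) - Real.sinh y / Real.cosh y) y :=
    ((hasDerivAt_pow 2 y).div_const (2 * t)).sub
      ((Real.hasDerivAt_cosh y).log (Real.cosh_pos y).ne')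
  have : 2 * y ^ 1 / (2 * t) - Real.sinh y / Real.cosh y = y / t - Real.tanh y := by
    rw [Real.tanh_eq_sinh_div_cosh, pow_one]
    congr 1
    rw [mul_comm 2 y, mul_comm 2 t, mul_div_mul_right y t two_ne_zero]
  rwa [this] at hd

lemma CW.continuous_F (t : ℝ) : Continuous (CW.F t) :=
  ((continuous_pow 2).div_const (2 * t)).sub
    (Real.continuous_cosh.log fun z => (Real.cosh_pos z).ne')

/-- **Spontaneous ℤ₂ symmetry breaking / shock formation.** For `t > 0` consider
`F_t(y) = y²/(2t) - log cosh y`.  If `0 < t ≤ 1`, then `y = 0` is the unique global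
minimizer of `F_t` and the only solution of `y = t·tanh y`.  If `t > 1`, then
`y = t·tanh y` has exactly one positive solution `y⋆ > 0`, and the set of global
minimizers of `F_t` is exactly `{y⋆, -y⋆}`; in particular the Hopf–Lax minimizer at
`x = 0` is non-unique for every `t > 1`. -/
theorem cw_spontaneous_symmetry_breaking (t : ℝ) (ht : 0 < t) :
    (t ≤ 1 →
      (∀ y : ℝ, y ≠ 0 →
        (0 : ℝ) ^ 2 / (2 * t) - Real.log (Real.cosh 0)
          < y ^ 2 / (2 * t) - Real.log (Real.cosh y)) ∧
      (∀ y : ℝ, y = t * Real.tanh y → y = 0)) ∧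
    (1 < t →
      ∃ ystar : ℝ, 0 < ystar ∧ ystar = t * Real.tanh ystar ∧
        (∀ y : ℝ, 0 < y → y = t * Real.tanh y → y = ystar) ∧
        {y : ℝ | ∀ z : ℝ, y ^ 2 / (2 * t) - Real.log (Real.cosh y)
            ≤ z ^ 2 / (2 * t) - Real.log (Real.cosh z)}
          = {ystar, -ystar}) := by
  constructor
  · intro ht1
    constructor
    · intro y hy
      have h1 : Real.log (Real.cosh y) < y ^ 2 / 2 := CW.log_cosh_lt hy
      have h2 : y ^ 2 / 2 ≤ y ^ 2 / (2 * t) :=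
        div_le_div_of_nonneg_left (sq_nonneg y) (by linarith) (by linarith)
      simp only [Real.cosh_zero, Real.log_one, ne_eq, OfNat.ofNat_ne_zero,
        not_false_eq_true, zero_pow, zero_div, sub_zero, sub_self]
      linarith
    · intro y hy
      by_contra h0
      rcases Ne.lt_or_gt h0 with hneg | hpos
      · have h1 : 0 < -y := by linarith
        have h2 := CW.tanh_lt_self h1
        have h3 := CW.tanh_pos h1
        rw [Real.tanh_neg] at h2 h3
        nlinarith
      · have h2 := CW.tanh_lt_self hpos
        have h3 := CW.tanh_pos hpos
        nlinarith
  · intro ht1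
    -- existence of a small point with a < t * tanh a
    have hd0 : HasDerivAt Real.tanh 1 0 := by
      have := CW.hasDerivAt_tanh 0
      simpa using this
    have hs : Filter.Tendsto (slope Real.tanh 0) (nhdsWithin 0 {(0:ℝ)}ᶜ) (nhds 1) :=
      hasDerivAt_iff_tendsto_slope.1 hd0
    have hev : ∀ᶠ y in nhdsWithin 0 {(0:ℝ)}ᶜ, 1 / t < slope Real.tanh 0 y :=
      hs.eventually (eventually_gt_nhds (by rw [div_lt_one ht]; exact ht1))
    have hev2 : ∀ᶠ y in nhdsWithin (0:ℝ) (Ioi 0), 1 / t < slope Real.tanh 0 y :=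
      hev.filter_mono (nhdsWithin_mono 0 (fun y hy => (mem_Ioi.1 hy).ne'))
    have hIoo : ∀ᶠ y in nhdsWithin (0:ℝ) (Ioi 0), y ∈ Ioo 0 t :=
      Filter.eventually_of_mem (Ioo_mem_nhdsGT ht) (fun y hy => hy)
    obtain ⟨a, hsl, haI⟩ := (hev2.and hIoo).exists
    have ha0 : 0 < a := haI.1
    have hat : a < t := haI.2
    rw [slope_def_field, Real.tanh_zero, sub_zero, sub_zero] at hsl
    have haKey : a < t * Real.tanh a := by
      rw [div_lt_div_iff₀ ht ha0] at hsl
      nlinarith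
    -- IVT for h(y) = t * tanh y - y on [a, t]
    have hcont : ContinuousOn (fun y => t * Real.tanh y - y) (Icc a t) :=
      ((continuous_const.mul CW.continuous_tanh).sub continuous_id).continuousOn
    have hht : t * Real.tanh t - t < 0 := by
      have := CW.tanh_lt_one t
      nlinarith
    have h0mem : (0:ℝ) ∈ Icc (t * Real.tanh t - t) (t * Real.tanh a - a) :=
      ⟨hht.le, by linarith⟩
    obtain ⟨ystar, hyI, hy0⟩ := intermediate_value_Icc' hat.le hcont h0mem
    have hypos : 0 < ystar := lt_of_lt_of_le ha0 hyI.1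
    have hyeq : ystar = t * Real.tanh ystar := by
      simp only at hy0; linarith
    have htanstar : Real.tanh ystar = ystar / t := by
      rw [eq_div_iff ht.ne']; linarith
    -- uniqueness of the positive solution
    have uniq : ∀ u v : ℝ, 0 < u → 0 < v → u = t * Real.tanh u → v = t * Real.tanh v →
        u = v := by
      intro u v hu hv hue hve
      have htu : Real.tanh u = u / t := by rw [eq_div_iff ht.ne']; linarith
      have htv : Real.tanh v = v / t := by rw [eq_div_iff ht.ne']; linarith
      rcases lt_trichotomy u v with h | h | h
      · exfalso
        have hk := CW.key hu h
        rw [htu, htv] at hk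
        have : u / v * (v / t) = u / t := by field_simp
        rw [this] at hk
        exact lt_irrefl _ hk
      · exact h
      · exfalso
        have hk := CW.key hv h
        rw [htu, htv] at hk
        have : v / u * (u / t) = v / t := by field_simp
        rw [this] at hk
        exact lt_irrefl _ hk
    refine ⟨ystar, hypos, hyeq, fun y hy hye => uniq y ystar hy hypos hye hyeq, ?_⟩
    -- monotonicity of F on [0, ystar] and [ystar, ∞)
    have hanti : StrictAntiOn (CW.F t) (Icc 0 ystar) := by
      apply strictAntiOn_of_deriv_neg (convex_Icc 0 ystar) (CW.continuous_F t).continuousOn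
      intro y hy
      rw [interior_Icc] at hy
      rw [(CW.hasDerivAt_F t ht y).deriv]
      have hk := CW.key hy.1 hy.2
      rw [htanstar] at hk
      have : y / ystar * (ystar / t) = y / t := by field_simp
      rw [this] at hk
      linarith
    have hmono : StrictMonoOn (CW.F t) (Ici ystar) := by
      apply strictMonoOn_of_deriv_pos (convex_Ici ystar) (CW.continuous_F t).continuousOn
      intro y hy
      rw [interior_Ici] at hy
      rw [(CW.hasDerivAt_F t ht y).deriv]
      have hypos' : 0 < y := hypos.trans hy
      have hk := CW.key hypos hy
      rw [htanstar] at hk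
      rw [div_mul_eq_mul_div, div_lt_div_iff₀ hypos' ht] at hk
      rw [sub_pos, lt_div_iff₀ ht]
      nlinarith
    have Fmin : ∀ z : ℝ, 0 ≤ z → z ≠ ystar → CW.F t ystar < CW.F t z := by
      intro z hz0 hzne
      rcases hzne.lt_or_gt with h | h
      · exact hanti ⟨hz0, h.le⟩ ⟨hypos.le, le_rfl⟩ h
      · exact hmono Set.self_mem_Ici (mem_Ici.2 h.le) h
    have Fabs : ∀ z : ℝ, CW.F t |z| = CW.F t z := by
      intro z
      rcases abs_cases z with ⟨h, _⟩ | ⟨h, _⟩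
      · rw [h]
      · rw [h, CW.F_neg]
    show {y : ℝ | ∀ z : ℝ, CW.F t y ≤ CW.F t z} = {ystar, -ystar}
    ext y
    simp only [Set.mem_setOf_eq, Set.mem_insert_iff, Set.mem_singleton_iff]
    constructor
    · intro hminy
      by_contra hc
      push_neg at hc
      have habs : |y| ≠ ystar := by
        intro h
        rcases (abs_eq hypos.le).1 h with h' | h'
        · exact hc.1 h'
        · exact hc.2 h'
      have h1 : CW.F t ystar < CW.F t |y| := Fmin |y| (abs_nonneg y) habs
      rw [Fabs] at h1
      exact absurd (hminy ystar) (not_le.2 h1)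
    · intro hy
      have hstar : ∀ z : ℝ, CW.F t ystar ≤ CW.F t z := by
        intro z
        by_cases hz : |z| = ystar
        · rw [← Fabs z, hz]
        · have := Fmin |z| (abs_nonneg z) hz
          rw [Fabs] at this
          exact this.le
      rcases hy with h | h
      · rw [h]; exact hstar
      · rw [h]; intro z; rw [CW.F_neg]; exact hstar z
end

section
/- (Curie–Weiss free energy.) For every t ≥ 0 and x ∈ ℝ, the limit lim_{N→∞} (1/N) log ∑_{σ ∈ {−1,1}^N} exp( (t/(2N)) (∑_{i=1}^N σ_i)² + x ∑_{i=1}^N σ_i ) exists and equals sup_{m ∈ [−1,1]} [ log 2 + log cosh(x + t m) − t m²/2 ]. -/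
open Real Filter Topology

lemma sum_exp_lin (N : ℕ) (c : ℝ) :
    ∑ σ : Fin N → ({-1, 1} : Finset ℝ), Real.exp (c * ∑ i, (σ i : ℝ))
      = (Real.exp (-c) + Real.exp c) ^ N := by
  have h1 : ∀ σ : Fin N → ({-1,1} : Finset ℝ),
      Real.exp (c * ∑ i, (σ i : ℝ)) = ∏ i, Real.exp (c * (σ i : ℝ)) := by
    intro σ
    rw [Finset.mul_sum, Real.exp_sum]
  simp_rw [h1]
  have h2 : (∑ σ : Fin N → ({-1,1} : Finset ℝ), ∏ i, Real.exp (c * (σ i : ℝ)))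
      = ∏ i : Fin N, ∑ j : ({-1,1} : Finset ℝ), Real.exp (c * (j : ℝ)) := by
    rw [Finset.prod_univ_sum, Fintype.piFinset_univ]
  rw [h2, Finset.prod_const, Finset.card_univ, Fintype.card_fin]
  congr 1
  rw [Finset.sum_coe_sort ({-1,1} : Finset ℝ) (fun j => Real.exp (c * j)),
    Finset.sum_pair (by norm_num : (-1:ℝ) ≠ 1)]
  ring_nf

lemma mag (N : ℕ) (σ : Fin N → ({-1, 1} : Finset ℝ)) :
    ∃ k ∈ Finset.range (N + 1), ∑ i, (σ i : ℝ) = 2 * k - N := by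
  classical
  set T := Finset.univ.filter (fun i => (σ i : ℝ) = 1) with hT
  refine ⟨T.card, ?_, ?_⟩
  · simp only [Finset.mem_range]
    exact Nat.lt_succ_of_le ((Finset.card_filter_le _ _).trans (by simp))
  · have hsplit := Finset.sum_filter_add_sum_filter_not Finset.univ
      (fun i => (σ i : ℝ) = 1) (fun i => (σ i : ℝ))
    have h1 : ∑ i ∈ T, (σ i : ℝ) = T.card := by
      rw [Finset.sum_congr rfl (fun i hi => (Finset.mem_filter.1 hi).2)]
      simp [T]
    have h2 : ∑ i ∈ Finset.univ.filter (fun i => ¬ ((σ i : ℝ) = 1)), (σ i : ℝ)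
        = -(N - T.card : ℕ) := by
      have : ∀ i ∈ Finset.univ.filter (fun i => ¬ ((σ i : ℝ) = 1)), (σ i : ℝ) = -1 := by
        intro i hi
        have hmem : (σ i : ℝ) ∈ ({-1, 1} : Finset ℝ) := (σ i).2
        simp only [Finset.mem_insert, Finset.mem_singleton] at hmem
        rcases hmem with h | h
        · exact h
        · exact absurd h (Finset.mem_filter.1 hi).2
      rw [Finset.sum_congr rfl this, Finset.sum_const,
        Finset.filter_not, Finset.card_sdiff_of_subset (Finset.filter_subset _ _)]
      simp [hT]
    have hcard : T.card ≤ N := (Finset.card_filter_le _ _).trans (by simp)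
    rw [← hsplit, h1, h2, Nat.cast_sub hcard]
    ring

/-- **Curie–Weiss free energy.**  For every `t ≥ 0` and `x ∈ ℝ`, the finite-volume
pressure `A_N(x,t) = (1/N) log ∑_{σ ∈ {-1,1}^N} exp((t/(2N))(∑ᵢσᵢ)² + x∑ᵢσᵢ)`
converges as `N → ∞` to `sup_{m ∈ [-1,1]} [log 2 + log cosh(x + t m) - t m²/2]`. -/
theorem cw_free_energy (t x : ℝ) (ht : 0 ≤ t) :
    Tendsto (fun N : ℕ =>
        (1 / (N : ℝ)) * Real.log (∑ σ : Fin N → ({-1, 1} : Finset ℝ),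
          Real.exp ((t / (2 * N)) * (∑ i, (σ i : ℝ)) ^ 2 + x * ∑ i, (σ i : ℝ))))
      atTop
      (𝓝 (⨆ m : Set.Icc (-1 : ℝ) 1,
        (Real.log 2 + Real.log (Real.cosh (x + t * m)) - t * (m : ℝ) ^ 2 / 2))) := by
  classical
  haveI : Nonempty (({-1, 1} : Finset ℝ)) := ⟨⟨1, by norm_num⟩⟩
  haveI : Nonempty (Set.Icc (-1:ℝ) 1) := ⟨⟨0, by norm_num⟩⟩
  set F : ℝ → ℝ := fun m => Real.log 2 + Real.log (Real.cosh (x + t * m)) - t * m ^ 2 / 2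
    with hF
  set L : ℝ := ⨆ m : Set.Icc (-1 : ℝ) 1,
      (Real.log 2 + Real.log (Real.cosh (x + t * m)) - t * (m : ℝ) ^ 2 / 2) with hL
  have hLF : L = ⨆ m : Set.Icc (-1 : ℝ) 1, F (m : ℝ) := rfl
  -- packaging: the linear sum equals exp(N * (log 2 + log cosh c))
  have pack : ∀ (N : ℕ) (c : ℝ),
      (∑ σ : Fin N → ({-1, 1} : Finset ℝ), Real.exp (c * ∑ i, (σ i : ℝ)))
        = Real.exp ((N : ℝ) * (Real.log 2 + Real.log (Real.cosh c))) := by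
    intro N c
    rw [sum_exp_lin]
    have h2c : (0:ℝ) < 2 * Real.cosh c := by positivity
    have hec : Real.exp (-c) + Real.exp c = 2 * Real.cosh c := by
      rw [Real.cosh_eq]; ring
    rw [hec, ← Real.exp_log h2c, ← Real.exp_nat_mul,
      Real.log_mul two_ne_zero (Real.cosh_pos c).ne']
  -- bddAbove of range of F on Icc
  have logcosh_le : ∀ y : ℝ, Real.log (Real.cosh y) ≤ |y| := by
    intro y
    have h1 : Real.cosh y ≤ Real.exp |y| := by
      rw [Real.cosh_eq]
      have h2 : Real.exp y ≤ Real.exp |y| := Real.exp_le_exp.2 (le_abs_self y)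
      have h3 : Real.exp (-y) ≤ Real.exp |y| := Real.exp_le_exp.2 (neg_le_abs y)
      linarith
    calc Real.log (Real.cosh y) ≤ Real.log (Real.exp |y|) :=
          Real.log_le_log (Real.cosh_pos y) h1
      _ = |y| := Real.log_exp _
  have hFle : ∀ m : ℝ, m ∈ Set.Icc (-1:ℝ) 1 → F m ≤ Real.log 2 + |x| + t := by
    intro m hm
    have hm1 : |m| ≤ 1 := abs_le.2 ⟨hm.1, hm.2⟩
    have h1 : Real.log (Real.cosh (x + t * m)) ≤ |x| + t := by
      calc Real.log (Real.cosh (x + t * m)) ≤ |x + t * m| := logcosh_le _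
        _ ≤ |x| + |t * m| := abs_add_le _ _
        _ ≤ |x| + t := by
            rw [abs_mul, abs_of_nonneg ht]
            nlinarith
    have h2 : 0 ≤ t * m ^ 2 / 2 := by positivity
    simp only [hF]
    linarith
  have bdd : BddAbove (Set.range fun m : Set.Icc (-1:ℝ) 1 => F (m : ℝ)) := by
    refine ⟨Real.log 2 + |x| + t, ?_⟩
    rintro _ ⟨m, rfl⟩
    exact hFle m m.2
  -- positivity of the partition function
  have Zpos : ∀ N : ℕ, 0 < ∑ σ : Fin N → ({-1, 1} : Finset ℝ),
      Real.exp ((t / (2 * N)) * (∑ i, (σ i : ℝ)) ^ 2 + x * ∑ i, (σ i : ℝ)) := by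
    intro N
    exact Finset.sum_pos (fun σ _ => Real.exp_pos _) Finset.univ_nonempty
  -- lower bound
  have lower : ∀ N : ℕ, 1 ≤ N →
      L ≤ (1 / (N : ℝ)) * Real.log (∑ σ : Fin N → ({-1, 1} : Finset ℝ),
        Real.exp ((t / (2 * N)) * (∑ i, (σ i : ℝ)) ^ 2 + x * ∑ i, (σ i : ℝ))) := by
    intro N hN
    have hN0 : (0:ℝ) < N := by exact_mod_cast hN
    rw [hLF]
    refine ciSup_le ?_
    rintro ⟨m, hm⟩
    have key : Real.exp ((N : ℝ) * F m) ≤ ∑ σ : Fin N → ({-1, 1} : Finset ℝ),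
        Real.exp ((t / (2 * N)) * (∑ i, (σ i : ℝ)) ^ 2 + x * ∑ i, (σ i : ℝ)) := by
      have step1 : Real.exp ((N : ℝ) * F m)
          = Real.exp (-(t * N * m^2/2)) *
            ∑ σ : Fin N → ({-1, 1} : Finset ℝ), Real.exp ((x + t*m) * ∑ i, (σ i : ℝ)) := by
        rw [pack, ← Real.exp_add]
        congr 1
        simp only [hF]
        ring
      rw [step1, Finset.mul_sum]
      refine Finset.sum_le_sum ?_
      intro σ _
      rw [← Real.exp_add]
      apply Real.exp_le_exp.2
      set S := ∑ i, (σ i : ℝ) with hS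
      have hq : (t / (2 * N)) * S ^ 2 + x * S - (-(t * N * m^2/2) + (x + t*m) * S)
          = (t / (2 * N)) * (S - N * m)^2 := by
        field_simp
        ring
      have hpos : 0 ≤ (t / (2 * N)) * (S - N * m)^2 := by positivity
      linarith
    have hZ := Zpos N
    have hlog := Real.log_le_log (Real.exp_pos _) key
    rw [Real.log_exp] at hlog
    rw [one_div, inv_mul_eq_div, le_div_iff₀ hN0]
    linarith [hlog]
  -- upper bound
  have upper : ∀ N : ℕ, 1 ≤ N →
      (1 / (N : ℝ)) * Real.log (∑ σ : Fin N → ({-1, 1} : Finset ℝ),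
        Real.exp ((t / (2 * N)) * (∑ i, (σ i : ℝ)) ^ 2 + x * ∑ i, (σ i : ℝ)))
        ≤ L + Real.log ((N : ℝ) + 1) / N := by
    intro N hN
    have hN0 : (0:ℝ) < N := by exact_mod_cast hN
    have key : (∑ σ : Fin N → ({-1, 1} : Finset ℝ),
        Real.exp ((t / (2 * N)) * (∑ i, (σ i : ℝ)) ^ 2 + x * ∑ i, (σ i : ℝ)))
        ≤ ((N : ℝ) + 1) * Real.exp ((N : ℝ) * L) := by
      have hpt : ∀ σ : Fin N → ({-1, 1} : Finset ℝ),
          Real.exp ((t / (2 * N)) * (∑ i, (σ i : ℝ)) ^ 2 + x * ∑ i, (σ i : ℝ))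
          ≤ ∑ k ∈ Finset.range (N + 1),
              Real.exp (-(t * N * (2*(k:ℝ)/N - 1)^2/2)) *
                Real.exp ((x + t*(2*(k:ℝ)/N - 1)) * ∑ i, (σ i : ℝ)) := by
        intro σ
        obtain ⟨k, hk, hSk⟩ := mag N σ
        have heq : Real.exp ((t / (2 * N)) * (∑ i, (σ i : ℝ)) ^ 2 + x * ∑ i, (σ i : ℝ))
            = Real.exp (-(t * N * (2*(k:ℝ)/N - 1)^2/2)) *
                Real.exp ((x + t*(2*(k:ℝ)/N - 1)) * ∑ i, (σ i : ℝ)) := by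
          rw [← Real.exp_add]
          congr 1
          rw [hSk]
          field_simp
          ring
        rw [heq]
        have hnn : ∀ j ∈ Finset.range (N + 1),
            0 ≤ Real.exp (-(t * N * (2*(j:ℝ)/N - 1)^2/2)) *
              Real.exp ((x + t*(2*(j:ℝ)/N - 1)) * ∑ i, (σ i : ℝ)) := fun j _ => by positivity
        exact Finset.single_le_sum (f := fun j : ℕ =>
          Real.exp (-(t * N * (2*(j:ℝ)/N - 1)^2/2)) *
            Real.exp ((x + t*(2*(j:ℝ)/N - 1)) * ∑ i, (σ i : ℝ))) hnn hk
      calc (∑ σ : Fin N → ({-1, 1} : Finset ℝ),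
            Real.exp ((t / (2 * N)) * (∑ i, (σ i : ℝ)) ^ 2 + x * ∑ i, (σ i : ℝ)))
          ≤ ∑ σ : Fin N → ({-1, 1} : Finset ℝ), ∑ k ∈ Finset.range (N + 1),
              Real.exp (-(t * N * (2*(k:ℝ)/N - 1)^2/2)) *
                Real.exp ((x + t*(2*(k:ℝ)/N - 1)) * ∑ i, (σ i : ℝ)) :=
            Finset.sum_le_sum (fun σ _ => hpt σ)
        _ = ∑ k ∈ Finset.range (N + 1), Real.exp (-(t * N * (2*(k:ℝ)/N - 1)^2/2)) *
              ∑ σ : Fin N → ({-1, 1} : Finset ℝ),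
                Real.exp ((x + t*(2*(k:ℝ)/N - 1)) * ∑ i, (σ i : ℝ)) := by
            rw [Finset.sum_comm]
            exact Finset.sum_congr rfl (fun k _ => by rw [Finset.mul_sum])
        _ = ∑ k ∈ Finset.range (N + 1), Real.exp ((N : ℝ) * F (2*(k:ℝ)/N - 1)) := by
            refine Finset.sum_congr rfl (fun k _ => ?_)
            rw [pack, ← Real.exp_add]
            congr 1
            simp only [hF]
            ring
        _ ≤ ∑ k ∈ Finset.range (N + 1), Real.exp ((N : ℝ) * L) := by
            refine Finset.sum_le_sum (fun k hk => ?_)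
            have hkN : (k : ℝ) ≤ N := by
              have := Finset.mem_range.1 hk
              exact_mod_cast Nat.lt_succ_iff.1 this
            have hmem : (2*(k:ℝ)/N - 1) ∈ Set.Icc (-1:ℝ) 1 := by
              constructor
              · have : (0:ℝ) ≤ 2*(k:ℝ)/N := by positivity
                linarith
              · have : 2*(k:ℝ)/N ≤ 2 := by
                  rw [div_le_iff₀ hN0]
                  linarith
                linarith
            apply Real.exp_le_exp.2
            apply mul_le_mul_of_nonneg_left _ (le_of_lt hN0)
            rw [hLF]
            exact le_ciSup bdd ⟨_, hmem⟩
        _ = ((N : ℝ) + 1) * Real.exp ((N : ℝ) * L) := by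
            rw [Finset.sum_const, Finset.card_range, nsmul_eq_mul]
            push_cast
            ring
    have hZ := Zpos N
    have hlog := Real.log_le_log hZ key
    rw [Real.log_mul (by positivity) (Real.exp_pos _).ne', Real.log_exp] at hlog
    rw [one_div, inv_mul_eq_div]
    rw [div_le_iff₀ hN0]
    calc Real.log (∑ σ : Fin N → ({-1, 1} : Finset ℝ),
          Real.exp ((t / (2 * N)) * (∑ i, (σ i : ℝ)) ^ 2 + x * ∑ i, (σ i : ℝ)))
        ≤ Real.log ((N : ℝ) + 1) + N * L := hlog
      _ = (L + Real.log ((N : ℝ) + 1) / N) * N := by field_simp; ring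
  -- the error term tends to 0
  have hlog0 : Tendsto (fun N : ℕ => Real.log ((N : ℝ) + 1) / N) atTop (𝓝 0) := by
    have h1 : Tendsto (fun N : ℕ => (N : ℝ) + 1) atTop atTop :=
      tendsto_atTop_add_const_right _ 1 tendsto_natCast_atTop_atTop
    have h2 := (Real.tendsto_pow_log_div_mul_add_atTop 1 (-1) 1 one_ne_zero).comp h1
    have hfe : (fun N : ℕ => Real.log ((N : ℝ) + 1) / N)
        = fun N : ℕ => Real.log ((N : ℝ) + 1) ^ 1 / (1 * ((N : ℝ) + 1) + (-1)) := by
      funext N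
      ring_nf
    rw [hfe]
    exact h2
  have hh : Tendsto (fun N : ℕ => L + Real.log ((N : ℝ) + 1) / N) atTop (𝓝 L) := by
    have := tendsto_const_nhds.add hlog0 (f := fun _ : ℕ => L) (x := atTop)
    simpa using this
  refine tendsto_of_tendsto_of_tendsto_of_le_of_le' tendsto_const_nhds hh ?_ ?_
  · filter_upwards [eventually_ge_atTop 1] with N hN
    exact lower N hN
  · filter_upwards [eventually_ge_atTop 1] with N hN
    exact upper N hN
end
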